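/- The class 𝒞 is nonempty and contains a C¹-interior point within 𝒜: there exist (f,g) ∈ 𝒜 satisfying So, Ho, Ee and Ca, and a real ε>0, such that every pair (f̃,g̃) ∈ 𝒜 with sup_{x∈I}|f̃(x)−f(x)|+sup_{x∈I}|f̃′(x)−f′(x)|<ε and sup_{x∈I}|g̃(x)−g(x)|+sup_{x∈I}|g̃′(x)−g′(x)|<ε also satisfies So, Ho, Ee and Ca. -/

import Mathlib

open Set Function MeasureTheory

noncomputable section

namespace IFSPaper

/-- The closed unit interval `I = [0,1]` as a subset of `ℝ`. -/
def unitI : Set ℝ := Set.Icc 0 1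

/-- Membership in the class `𝒜`: `f, g : I → I` are `C¹` diffeomorphisms onto their
images with `f 0 = 0`, `g 1 = 1`, `f x < x < g x` on `(0,1)` and `0 < g 0 < f 1 < 1`. -/
structure MemA (f g : ℝ → ℝ) : Prop where
  f_maps : Set.MapsTo f unitI unitI
  g_maps : Set.MapsTo g unitI unitI
  f_c1 : ContDiff ℝ 1 f
  g_c1 : ContDiff ℝ 1 g
  f_inj : Set.InjOn f unitI
  g_inj : Set.InjOn g unitI
  f_deriv_ne : ∀ x ∈ unitI, deriv f x ≠ 0
  g_deriv_ne : ∀ x ∈ unitI, deriv g x ≠ 0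
  f_zero : f 0 = 0
  g_one : g 1 = 1
  f_lt_id : ∀ x ∈ Set.Ioo (0:ℝ) 1, f x < x
  id_lt_g : ∀ x ∈ Set.Ioo (0:ℝ) 1, x < g x
  g0_pos : 0 < g 0
  g0_lt_f1 : g 0 < f 1
  f1_lt_one : f 1 < 1

/-- The element of the semigroup `⟨f,g⟩₊` associated to a word in the two generators
(`true ↦ f`, `false ↦ g`). -/
def word (f g : ℝ → ℝ) : List Bool → ℝ → ℝ
  | [] => id
  | b :: t => (if b then f else g) ∘ word f g t

/-- The semigroup orbit `O₊(x) = {φ x : φ ∈ ⟨f,g⟩₊}` of a point `x`. -/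
def orbitP (f g : ℝ → ℝ) (x : ℝ) : Set ℝ :=
  {y | ∃ w : List Bool, w ≠ [] ∧ word f g w x = y}

/-- `K` is a minimal set for the action of `⟨f,g⟩₊` on `I`. -/
def IsMinimalSet (f g : ℝ → ℝ) (K : Set ℝ) : Prop :=
  K.Nonempty ∧ K ⊆ unitI ∧ ∀ x ∈ K, closure (orbitP f g x) = K

/-- The overlapping region `W = [g 0, f 1]`. -/
def ovW (f g : ℝ → ℝ) : Set ℝ := Set.Icc (g 0) (f 1)

/-- The fundamental domain `Fₙ = [f^[n+1] 1, f^[n] 1]`. -/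
def Fint (f : ℝ → ℝ) (n : ℕ) : Set ℝ := Set.Icc (f^[n+1] 1) (f^[n] 1)

/-- The fundamental domain `Gₙ = [g^[n] 0, g^[n+1] 0]`. -/
def Gint (g : ℝ → ℝ) (n : ℕ) : Set ℝ := Set.Icc (g^[n] 0) (g^[n+1] 0)

/-- Single overlapping property `So`: `f² 1 < g 0` and `f 1 < g² 0`. -/
def So (f g : ℝ → ℝ) : Prop := f (f 1) < g 0 ∧ f 1 < g (g 0)

/-- A (nonempty) closed bounded interval. -/
def IsClosedInterval (A : Set ℝ) : Prop := ∃ a b : ℝ, a ≤ b ∧ A = Set.Icc a b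

/-- A closed bounded interval with nonempty interior. -/
def IsNondegClosedInterval (A : Set ℝ) : Prop := ∃ a b : ℝ, a < b ∧ A = Set.Icc a b

/-- A nonempty open bounded interval. -/
def IsOpenInterval (J : Set ℝ) : Prop := ∃ a b : ℝ, a < b ∧ J = Set.Ioo a b

/-- Hole property `Ho` witnessed by the pair of holes `(Hf, Hg)`. -/
def HoleAt (f g : ℝ → ℝ) (Hf Hg : Set ℝ) : Prop :=
  IsNondegClosedInterval Hf ∧ IsNondegClosedInterval Hg ∧
  Hf ⊆ interior (Fint f 1 \ ovW f g) ∧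
  Hg ⊆ interior (Gint g 1 \ ovW f g) ∧
  g '' Hf = Hg ∧ f '' Hg = Hf

/-- Hole property `Ho`. -/
def Ho (f g : ℝ → ℝ) : Prop := ∃ Hf Hg : Set ℝ, HoleAt f g Hf Hg

/-- The induced (first-return) map `𝓕 : F₁ \ {f 1} → G₁`,
`𝓕 x = g^[-n x] (f⁻¹ x)` where `n x` is least with `g^[-n x] (f⁻¹ x) ∈ G₁`. -/
def calF (f g : ℝ → ℝ) (x : ℝ) : ℝ :=
  (Function.invFunOn g unitI)^[sInf {n : ℕ |
      (Function.invFunOn g unitI)^[n] (Function.invFunOn f unitI x) ∈ Gint g 1}]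
    (Function.invFunOn f unitI x)

/-- The induced (first-return) map `𝓖 : G₁ \ {g 0} → F₁`. -/
def calG (f g : ℝ → ℝ) (x : ℝ) : ℝ :=
  (Function.invFunOn f unitI)^[sInf {n : ℕ |
      (Function.invFunOn f unitI)^[n] (Function.invFunOn g unitI x) ∈ Fint f 1}]
    (Function.invFunOn g unitI x)

/-- Eventual expansion property `Ee`: `𝓕` is uniformly expanding outside `Hf`
and `𝓖` outside `Hg` (at all points where the derivative makes sense). -/
def Ee (f g : ℝ → ℝ) (Hf Hg : Set ℝ) : Prop :=
  ∃ μ : ℝ, 1 < μ ∧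
    (∀ y ∈ Fint f 1 \ Hf, DifferentiableAt ℝ (calF f g) y → μ < deriv (calF f g) y) ∧
    (∀ y ∈ Gint g 1 \ Hg, DifferentiableAt ℝ (calG f g) y → μ < deriv (calG f g) y)

/-- The ruination region `R_f = 𝓕⁻¹(Hg) ⊆ F₁`. -/
def Rf (f g : ℝ → ℝ) (Hg : Set ℝ) : Set ℝ :=
  {x | x ∈ Fint f 1 \ {f 1} ∧ calF f g x ∈ Hg}

/-- The ruination region `R_g = 𝓖⁻¹(Hf) ⊆ G₁`. -/
def Rg (f g : ℝ → ℝ) (Hf : Set ℝ) : Set ℝ :=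
  {x | x ∈ Gint g 1 \ {g 0} ∧ calG f g x ∈ Hf}

/-- Castration property `Ca`: `W ⊆ int R_f ∪ int R_g`. -/
def Ca (f g : ℝ → ℝ) (Hf Hg : Set ℝ) : Prop :=
  ovW f g ⊆ interior (Rf f g Hg) ∪ interior (Rg f g Hf)

/-- Membership in the class `𝒞` with the given holes `(Hf, Hg)`:
`(f,g) ∈ 𝒜` together with `So`, `Ho`, `Ee` and `Ca`. -/
def MemC (f g : ℝ → ℝ) (Hf Hg : Set ℝ) : Prop :=
  MemA f g ∧ So f g ∧ HoleAt f g Hf Hg ∧ Ee f g Hf Hg ∧ Ca f g Hf Hg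

/-- The interval `I₋₁ = [0, 1/3 - ε]` of the appendix example. -/
def Im1 (ε : ℝ) : Set ℝ := Set.Icc 0 (1/3 - ε)

/-- The interval `I₀ = [1/3 + ε, 2/3 - ε]` of the appendix example. -/
def Iz (ε : ℝ) : Set ℝ := Set.Icc (1/3 + ε) (2/3 - ε)

/-- The interval `I₁ = [2/3 + ε, 1]` of the appendix example. -/
def Ip1 (ε : ℝ) : Set ℝ := Set.Icc (2/3 + ε) 1

/-- The inclusion property of the appendix example. -/
def InclusionProp (f g : ℝ → ℝ) (ε : ℝ) : Prop :=
  f '' Im1 ε ⊆ Im1 ε ∧ f '' Iz ε ⊆ interior (Im1 ε) ∧ f '' Ip1 ε ⊆ interior (Iz ε) ∧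
  g '' Ip1 ε ⊆ Ip1 ε ∧ g '' Iz ε ⊆ interior (Ip1 ε) ∧ g '' Im1 ε ⊆ interior (Iz ε)

/-- The strong uniform contraction property of the appendix example. -/
def StrongContraction (f g : ℝ → ℝ) (ε lam : ℝ) : Prop :=
  ∀ x ∈ Im1 ε ∪ Iz ε ∪ Ip1 ε, deriv f x < lam ∧ deriv g x < lam



/-! ### Auxiliary: explicit polynomial model pair -/

def cA : ℝ := ((13678635029219797594715304845006643988787573374652854194409101535795375777492887782327 : ℝ)/275005640141459758806662217580933713912324785171026331198618208873085677623748779296875)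
def cB1 : ℝ := ((32837004219717057230892202847091731717924704375324106024968571 : ℝ)/294426161375787646889782890478739710211753845214843750)
def cB0 : ℝ := 9/5
def cB2 : ℝ := 32000

def pp0 : ℝ → ℝ := fun x => x^2/2 - 2*x^3/3 + x^4/4
def pp1 : ℝ → ℝ := fun x => x^22/22 - 9*x^23/23 + 36*x^24/24 - 84*x^25/25 + 126*x^26/26
  - 126*x^27/27 + 84*x^28/28 - 36*x^29/29 + 9*x^30/30 - x^31/31
def pp2 : ℝ → ℝ := fun x => x^41/41 - 3*x^42/42 + 3*x^43/43 - x^44/44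
def fB : ℝ → ℝ := fun x => cA*x + cB0 * pp0 x + cB1 * pp1 x + cB2 * pp2 x
def phiB : ℝ → ℝ := fun x => cA + cB0*(x*(1-x)^2) + cB1*(x^21*(1-x)^9) + cB2*(x^40*(1-x)^3)
def gB : ℝ → ℝ := fun x => 1 - fB (1 - x)

lemma cA_pos : 0 < cA := by norm_num [cA]
lemma cA_lb : (49:ℝ)/1000 ≤ cA := by norm_num [cA]
lemma cA_ub : cA ≤ (5:ℝ)/100 := by norm_num [cA]
lemma cB1_pos : 0 < cB1 := by norm_num [cB1]
lemma cB0_pos : 0 < cB0 := by norm_num [cB0]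
lemma cB2_pos : 0 < cB2 := by norm_num [cB2]

lemma fB_hasDerivAt (x : ℝ) : HasDerivAt fB (phiB x) x := by
  have h : HasDerivAt (fun x : ℝ => cA*x + cB0 * pp0 x + cB1 * pp1 x + cB2 * pp2 x)
      (cA*1 + cB0 * (2*x^(2-1)/2 - 2*(3*x^(3-1))/3 + 4*x^(4-1)/4)
        + cB1 * (22*x^(22-1)/22 - 9*(23*x^(23-1))/23 + 36*(24*x^(24-1))/24 - 84*(25*x^(25-1))/25
            + 126*(26*x^(26-1))/26 - 126*(27*x^(27-1))/27 + 84*(28*x^(28-1))/28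
            - 36*(29*x^(29-1))/29 + 9*(30*x^(30-1))/30 - 31*x^(31-1)/31)
        + cB2 * (41*x^(41-1)/41 - 3*(42*x^(42-1))/42 + 3*(43*x^(43-1))/43 - 44*x^(44-1)/44)) x := by
    unfold pp0 pp1 pp2
    apply HasDerivAt.add
    apply HasDerivAt.add
    apply HasDerivAt.add
    · simpa using (hasDerivAt_id x).const_mul cA
    · exact HasDerivAt.const_mul _ <| (((hasDerivAt_pow 2 x).div_const 2).sub
        (((hasDerivAt_pow 3 x).const_mul 2).div_const 3)).add ((hasDerivAt_pow 4 x).div_const 4)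
    · refine HasDerivAt.const_mul _ ?_
      exact ((((((((((hasDerivAt_pow 22 x).div_const 22).sub
        (((hasDerivAt_pow 23 x).const_mul 9).div_const 23)).add
        (((hasDerivAt_pow 24 x).const_mul 36).div_const 24)).sub
        (((hasDerivAt_pow 25 x).const_mul 84).div_const 25)).add
        (((hasDerivAt_pow 26 x).const_mul 126).div_const 26)).sub
        (((hasDerivAt_pow 27 x).const_mul 126).div_const 27)).add
        (((hasDerivAt_pow 28 x).const_mul 84).div_const 28)).sub
        (((hasDerivAt_pow 29 x).const_mul 36).div_const 29)).add
        (((hasDerivAt_pow 30 x).const_mul 9).div_const 30)).sub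
        ((hasDerivAt_pow 31 x).div_const 31)
    · refine HasDerivAt.const_mul _ ?_
      exact ((((hasDerivAt_pow 41 x).div_const 41).sub
        (((hasDerivAt_pow 42 x).const_mul 3).div_const 42)).add
        (((hasDerivAt_pow 43 x).const_mul 3).div_const 43)).sub ((hasDerivAt_pow 44 x).div_const 44)
  have : fB = (fun x : ℝ => cA*x + cB0 * pp0 x + cB1 * pp1 x + cB2 * pp2 x) := rfl
  rw [this]
  convert h using 1
  unfold phiB
  norm_num
  ring

lemma fB_deriv : deriv fB = phiB := funext fun x => (fB_hasDerivAt x).deriv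

lemma phiB_cont : Continuous phiB := by unfold phiB; continuity

lemma fB_contDiff : ContDiff ℝ 1 fB := by
  rw [contDiff_one_iff_deriv]
  exact ⟨fun x => (fB_hasDerivAt x).differentiableAt, by rw [fB_deriv]; exact phiB_cont⟩

lemma gB_hasDerivAt (x : ℝ) : HasDerivAt gB (phiB (1 - x)) x := by
  have h1 : HasDerivAt (fun y : ℝ => 1 - y) (-1) x := by
    simpa using (hasDerivAt_id x).const_sub 1
  have h2 := (fB_hasDerivAt (1 - x)).comp x h1
  have h3 : HasDerivAt (fun y : ℝ => fB (1 - y)) (-(phiB (1-x))) x := by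
    refine h2.congr_deriv ?_; ring
  exact (h3.const_sub 1).congr_deriv (neg_neg _)

lemma gB_deriv : deriv gB = fun x => phiB (1 - x) := funext fun x => (gB_hasDerivAt x).deriv

lemma gB_contDiff : ContDiff ℝ 1 gB := by
  rw [contDiff_one_iff_deriv]
  refine ⟨fun x => (gB_hasDerivAt x).differentiableAt, ?_⟩
  rw [gB_deriv]; exact phiB_cont.comp (by continuity)



/-! ### Monotonicity of the bump terms and derivative bounds -/

lemma u0_hasDeriv (x : ℝ) : HasDerivAt (fun x : ℝ => x*(1-x)^2) ((1-x)*(1-3*x)) x := by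
  have h2 : HasDerivAt (fun y : ℝ => (1-y)^2) (2*(1-x)^(2-1)*(-1)) x :=
    ((hasDerivAt_id x).const_sub 1).pow 2
  have := (hasDerivAt_id x).mul h2
  refine this.congr_deriv ?_
  simp only [id_eq]
  ring

lemma u1_hasDeriv (x : ℝ) :
    HasDerivAt (fun x : ℝ => x^21*(1-x)^9) (x^20*(1-x)^8*(21-30*x)) x := by
  have h2 : HasDerivAt (fun y : ℝ => (1-y)^9) (9*(1-x)^(9-1)*(-1)) x :=
    ((hasDerivAt_id x).const_sub 1).pow 9
  have := (hasDerivAt_pow 21 x).mul h2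
  refine this.congr_deriv ?_
  norm_num
  ring

lemma u2_hasDeriv (x : ℝ) :
    HasDerivAt (fun x : ℝ => x^40*(1-x)^3) (x^39*(1-x)^2*(40-43*x)) x := by
  have h2 : HasDerivAt (fun y : ℝ => (1-y)^3) (3*(1-x)^(3-1)*(-1)) x :=
    ((hasDerivAt_id x).const_sub 1).pow 3
  have := (hasDerivAt_pow 40 x).mul h2
  refine this.congr_deriv ?_
  norm_num
  ring

lemma u0_monoOn : MonotoneOn (fun x : ℝ => x*(1-x)^2) (Set.Icc 0 (1/3)) := by
  apply monotoneOn_of_deriv_nonneg (convex_Icc _ _) (Continuous.continuousOn (by continuity))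
    (fun x _ => (u0_hasDeriv x).differentiableAt.differentiableWithinAt)
  intro x hx
  rw [interior_Icc, Set.mem_Ioo] at hx
  rw [(u0_hasDeriv x).deriv]
  nlinarith [hx.1, hx.2]

lemma u0_antiOn : AntitoneOn (fun x : ℝ => x*(1-x)^2) (Set.Icc (1/3) 1) := by
  apply antitoneOn_of_deriv_nonpos (convex_Icc _ _) (Continuous.continuousOn (by continuity))
    (fun x _ => (u0_hasDeriv x).differentiableAt.differentiableWithinAt)
  intro x hx
  rw [interior_Icc, Set.mem_Ioo] at hx
  rw [(u0_hasDeriv x).deriv]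
  nlinarith [hx.1, hx.2]

lemma u1_monoOn : MonotoneOn (fun x : ℝ => x^21*(1-x)^9) (Set.Icc 0 (7/10)) := by
  apply monotoneOn_of_deriv_nonneg (convex_Icc _ _) (Continuous.continuousOn (by continuity))
    (fun x _ => (u1_hasDeriv x).differentiableAt.differentiableWithinAt)
  intro x hx
  rw [interior_Icc, Set.mem_Ioo] at hx
  rw [(u1_hasDeriv x).deriv]
  have h1 : (0:ℝ) ≤ x^20 := by positivity
  have h2 : (0:ℝ) ≤ (1-x)^8 := by positivity
  have h3 : (0:ℝ) ≤ 21-30*x := by nlinarith [hx.2]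
  exact mul_nonneg (mul_nonneg h1 h2) h3

lemma u1_antiOn : AntitoneOn (fun x : ℝ => x^21*(1-x)^9) (Set.Icc (7/10) 1) := by
  apply antitoneOn_of_deriv_nonpos (convex_Icc _ _) (Continuous.continuousOn (by continuity))
    (fun x _ => (u1_hasDeriv x).differentiableAt.differentiableWithinAt)
  intro x hx
  rw [interior_Icc, Set.mem_Ioo] at hx
  rw [(u1_hasDeriv x).deriv]
  have h1 : (0:ℝ) ≤ x^20 := by positivity
  have h2 : (0:ℝ) ≤ (1-x)^8 := by positivity
  have h3 : 21-30*x ≤ (0:ℝ) := by nlinarith [hx.1]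
  exact mul_nonpos_of_nonneg_of_nonpos (mul_nonneg h1 h2) h3

lemma u2_monoOn : MonotoneOn (fun x : ℝ => x^40*(1-x)^3) (Set.Icc 0 (40/43)) := by
  apply monotoneOn_of_deriv_nonneg (convex_Icc _ _) (Continuous.continuousOn (by continuity))
    (fun x _ => (u2_hasDeriv x).differentiableAt.differentiableWithinAt)
  intro x hx
  rw [interior_Icc, Set.mem_Ioo] at hx
  rw [(u2_hasDeriv x).deriv]
  have h1 : (0:ℝ) ≤ x^39 := pow_nonneg (by linarith [hx.1]) 39
  have h2 : (0:ℝ) ≤ (1-x)^2 := by positivity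
  have h3 : (0:ℝ) ≤ 40-43*x := by nlinarith [hx.2]
  exact mul_nonneg (mul_nonneg h1 h2) h3

lemma u2_antiOn : AntitoneOn (fun x : ℝ => x^40*(1-x)^3) (Set.Icc (40/43) 1) := by
  apply antitoneOn_of_deriv_nonpos (convex_Icc _ _) (Continuous.continuousOn (by continuity))
    (fun x _ => (u2_hasDeriv x).differentiableAt.differentiableWithinAt)
  intro x hx
  rw [interior_Icc, Set.mem_Ioo] at hx
  rw [(u2_hasDeriv x).deriv]
  have h1 : (0:ℝ) ≤ x^39 := pow_nonneg (by linarith [hx.1]) 39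
  have h2 : (0:ℝ) ≤ (1-x)^2 := by positivity
  have h3 : 40-43*x ≤ (0:ℝ) := by nlinarith [hx.1]
  exact mul_nonpos_of_nonneg_of_nonpos (mul_nonneg h1 h2) h3

lemma u0_le_max (x : ℝ) (hx : x ∈ Set.Icc (0:ℝ) 1) : x*(1-x)^2 ≤ 4/27 := by
  obtain ⟨h1, h2⟩ := hx
  nlinarith [mul_nonneg (sq_nonneg (3*x-1)) (by linarith : (0:ℝ) ≤ 4 - 3*x)]

lemma u1_le_max (x : ℝ) (hx : x ∈ Set.Icc (0:ℝ) 1) :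
    x^21*(1-x)^9 ≤ (7/10:ℝ)^21*(1-7/10)^9 := by
  rcases le_total x (7/10) with h | h
  · exact u1_monoOn ⟨hx.1, h⟩ ⟨by norm_num, by norm_num⟩ h
  · exact u1_antiOn ⟨by norm_num, by norm_num⟩ ⟨h, hx.2⟩ h

lemma u2_le_max (x : ℝ) (hx : x ∈ Set.Icc (0:ℝ) 1) :
    x^40*(1-x)^3 ≤ (40/43:ℝ)^40*(1-40/43)^3 := by
  rcases le_total x (40/43) with h | h
  · exact u2_monoOn ⟨hx.1, h⟩ ⟨by norm_num, by norm_num⟩ h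
  · exact u2_antiOn ⟨by norm_num, by norm_num⟩ ⟨h, hx.2⟩ h

lemma phiB_ge_cA (x : ℝ) (hx : x ∈ Set.Icc (0:ℝ) 1) : cA ≤ phiB x := by
  obtain ⟨h1, h2⟩ := hx
  have h3 : (0:ℝ) ≤ 1 - x := by linarith
  have e1 : (0:ℝ) ≤ x*(1-x)^2 := by positivity
  have e2 : (0:ℝ) ≤ x^21*(1-x)^9 := by positivity
  have e3 : (0:ℝ) ≤ x^40*(1-x)^3 := by positivity
  unfold phiB
  nlinarith [mul_nonneg cB0_pos.le e1, mul_nonneg cB1_pos.le e2, mul_nonneg cB2_pos.le e3]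

lemma phiB_pos (x : ℝ) (hx : x ∈ Set.Icc (0:ℝ) 1) : 0 < phiB x :=
  lt_of_lt_of_le cA_pos (phiB_ge_cA x hx)

lemma phiB_le_L (x : ℝ) (hx : x ∈ Set.Icc (0:ℝ) 1) : phiB x ≤ 5/2 := by
  have e1 := u0_le_max x hx
  have e2 := u1_le_max x hx
  have e3 := u2_le_max x hx
  have h : phiB x ≤ cA + cB0*(4/27) + cB1*((7/10:ℝ)^21*(1-7/10)^9)
      + cB2*((40/43:ℝ)^40*(1-40/43)^3) := by
    unfold phiB
    gcongr
    · exact cB0_pos.le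
    · exact cB1_pos.le
    · exact cB2_pos.le
  refine le_trans h ?_
  norm_num [cA, cB0, cB1, cB2]

lemma phiB_le_low (x : ℝ) (hx : x ∈ Set.Icc (0:ℝ) (57/100)) : phiB x ≤ 97/100 := by
  have hx1 : x ∈ Set.Icc (0:ℝ) 1 := ⟨hx.1, le_trans hx.2 (by norm_num)⟩
  have e1 := u0_le_max x hx1
  have e2 : x^21*(1-x)^9 ≤ (57/100:ℝ)^21*(1-57/100)^9 :=
    u1_monoOn ⟨hx.1, le_trans hx.2 (by norm_num)⟩ ⟨by norm_num, by norm_num⟩ hx.2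
  have e3 : x^40*(1-x)^3 ≤ (57/100:ℝ)^40*(1-57/100)^3 :=
    u2_monoOn ⟨hx.1, le_trans hx.2 (by norm_num)⟩ ⟨by norm_num, by norm_num⟩ hx.2
  have h : phiB x ≤ cA + cB0*(4/27) + cB1*((57/100:ℝ)^21*(1-57/100)^9)
      + cB2*((57/100:ℝ)^40*(1-57/100)^3) := by
    unfold phiB
    gcongr
    · exact cB0_pos.le
    · exact cB1_pos.le
    · exact cB2_pos.le
  refine le_trans h ?_
  norm_num [cA, cB0, cB1, cB2]

lemma phiB_le_high (x : ℝ) (hx : x ∈ Set.Icc (83/100:ℝ) 1) : phiB x ≤ 97/100 := by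
  have h13 : (1/3:ℝ) ≤ 83/100 := by norm_num
  have h710 : (7/10:ℝ) ≤ 83/100 := by norm_num
  rcases le_total x (9/10) with h | h
  · have e1 : x*(1-x)^2 ≤ (83/100:ℝ)*(1-83/100)^2 :=
      u0_antiOn ⟨h13, by norm_num⟩ ⟨le_trans h13 hx.1, hx.2⟩ hx.1
    have e2 : x^21*(1-x)^9 ≤ (83/100:ℝ)^21*(1-83/100)^9 :=
      u1_antiOn ⟨h710, by norm_num⟩ ⟨le_trans h710 hx.1, hx.2⟩ hx.1
    have e3 : x^40*(1-x)^3 ≤ (9/10:ℝ)^40*(1-9/10)^3 :=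
      u2_monoOn ⟨le_trans (by norm_num) hx.1, le_trans h (by norm_num)⟩
        ⟨by norm_num, by norm_num⟩ h
    have hh : phiB x ≤ cA + cB0*((83/100:ℝ)*(1-83/100)^2) + cB1*((83/100:ℝ)^21*(1-83/100)^9)
        + cB2*((9/10:ℝ)^40*(1-9/10)^3) := by
      unfold phiB
      gcongr
      · exact cB0_pos.le
      · exact cB1_pos.le
      · exact cB2_pos.le
    refine le_trans hh ?_
    norm_num [cA, cB0, cB1, cB2]
  · have h910 : (9/10:ℝ) ≤ x := h
    have e1 : x*(1-x)^2 ≤ (9/10:ℝ)*(1-9/10)^2 :=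
      u0_antiOn ⟨by norm_num, by norm_num⟩ ⟨by linarith, hx.2⟩ h910
    have e2 : x^21*(1-x)^9 ≤ (9/10:ℝ)^21*(1-9/10)^9 :=
      u1_antiOn ⟨by norm_num, by norm_num⟩ ⟨by linarith, hx.2⟩ h910
    have e3 : x^40*(1-x)^3 ≤ (40/43:ℝ)^40*(1-40/43)^3 :=
      u2_le_max x ⟨le_trans (by norm_num) hx.1, hx.2⟩
    have hh : phiB x ≤ cA + cB0*((9/10:ℝ)*(1-9/10)^2) + cB1*((9/10:ℝ)^21*(1-9/10)^9)
        + cB2*((40/43:ℝ)^40*(1-40/43)^3) := by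
      unfold phiB
      gcongr
      · exact cB0_pos.le
      · exact cB1_pos.le
      · exact cB2_pos.le
    refine le_trans hh ?_
    norm_num [cA, cB0, cB1, cB2]

/-- combined off-core bound -/
lemma phiB_le_offcore (x : ℝ) (hx : x ∈ Set.Icc (0:ℝ) 1)
    (hout : x ∉ Set.Ioo (57/100:ℝ) (83/100)) : phiB x ≤ 97/100 := by
  rw [Set.mem_Ioo, not_and_or, not_lt, not_lt] at hout
  rcases hout with h | h
  · exact phiB_le_low x ⟨hx.1, h⟩
  · exact phiB_le_high x ⟨h, hx.2⟩



lemma nb_f1lo : fB (1 : ℝ) ≥ ((51013 : ℝ)/100000) := by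
  norm_num [fB, pp0, pp1, pp2, cA, cB0, cB1, cB2]

lemma nb_f1hi : fB (1 : ℝ) ≤ ((25507 : ℝ)/50000) := by
  norm_num [fB, pp0, pp1, pp2, cA, cB0, cB1, cB2]

lemma nb_f21hi : fB ((10203 : ℝ)/20000) ≤ ((6783 : ℝ)/50000) := by
  norm_num [fB, pp0, pp1, pp2, cA, cB0, cB1, cB2]

lemma nb_f21lo : fB ((12753 : ℝ)/25000) ≥ ((3391 : ℝ)/25000) := by
  norm_num [fB, pp0, pp1, pp2, cA, cB0, cB1, cB2]

lemma nb_e85hi : fB ((17 : ℝ)/20) ≤ ((44397 : ℝ)/100000) := by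
  norm_num [fB, pp0, pp1, pp2, cA, cB0, cB1, cB2]

lemma nb_hp1lo : fB ((27801 : ℝ)/50000) ≥ ((3153 : ℝ)/20000) := by
  norm_num [fB, pp0, pp1, pp2, cA, cB0, cB1, cB2]

lemma nb_e83lo : fB ((83 : ℝ)/100) ≥ ((43573 : ℝ)/100000) := by
  norm_num [fB, pp0, pp1, pp2, cA, cB0, cB1, cB2]

lemma nb_hp2hi : fB ((14107 : ℝ)/25000) ≤ ((8131 : ℝ)/50000) := by
  norm_num [fB, pp0, pp1, pp2, cA, cB0, cB1, cB2]

lemma nb_e57hi : fB ((57 : ℝ)/100) ≤ ((16629 : ℝ)/100000) := by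
  norm_num [fB, pp0, pp1, pp2, cA, cB0, cB1, cB2]

lemma nb_hq1lo : fB ((8337 : ℝ)/10000) ≥ ((5467 : ℝ)/12500) := by
  norm_num [fB, pp0, pp1, pp2, cA, cB0, cB1, cB2]

lemma nb_e55lo : fB ((11 : ℝ)/20) ≥ ((7713 : ℝ)/50000) := by
  norm_num [fB, pp0, pp1, pp2, cA, cB0, cB1, cB2]

lemma nb_hq2hi : fB ((3383 : ℝ)/4000) ≤ ((44231 : ℝ)/100000) := by
  norm_num [fB, pp0, pp1, pp2, cA, cB0, cB1, cB2]

lemma nb_caU1a : fB ((43571 : ℝ)/100000) ≥ ((2749 : ℝ)/25000) := by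
  norm_num [fB, pp0, pp1, pp2, cA, cB0, cB1, cB2]

lemma nb_caU1b : fB ((44503 : ℝ)/50000) ≤ ((1843 : ℝ)/4000) := by
  norm_num [fB, pp0, pp1, pp2, cA, cB0, cB1, cB2]

lemma nb_caU1c : fB ((16631 : ℝ)/100000) ≤ ((2799 : ℝ)/100000) := by
  norm_num [fB, pp0, pp1, pp2, cA, cB0, cB1, cB2]

lemma nb_caU1d : fB ((97199 : ℝ)/100000) ≥ ((5067 : ℝ)/10000) := by
  norm_num [fB, pp0, pp1, pp2, cA, cB0, cB1, cB2]

lemma nb_caU2a : fB ((17 : ℝ)/100) ≤ ((579 : ℝ)/20000) := by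
  norm_num [fB, pp0, pp1, pp2, cA, cB0, cB1, cB2]

lemma nb_caU2b : fB ((97103 : ℝ)/100000) ≥ ((25321 : ℝ)/50000) := by
  norm_num [fB, pp0, pp1, pp2, cA, cB0, cB1, cB2]

lemma nb_caU2c : fB ((43 : ℝ)/100) ≥ ((338 : ℝ)/3125) := by
  norm_num [fB, pp0, pp1, pp2, cA, cB0, cB1, cB2]

lemma nb_caU2d : fB ((44593 : ℝ)/50000) ≤ ((9233 : ℝ)/20000) := by
  norm_num [fB, pp0, pp1, pp2, cA, cB0, cB1, cB2]

lemma nb_e49hi : fB ((49 : ℝ)/100) ≤ ((12801 : ℝ)/100000) := by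
  norm_num [fB, pp0, pp1, pp2, cA, cB0, cB1, cB2]



lemma unitI_def : unitI = Set.Icc (0:ℝ) 1 := rfl

lemma mem_unitI {x : ℝ} : x ∈ unitI ↔ 0 ≤ x ∧ x ≤ 1 := Set.mem_Icc

lemma fB_zero : fB 0 = 0 := by norm_num [fB, pp0, pp1, pp2]

lemma fB_r : fB (14/25) = 4/25 := by
  norm_num [fB, pp0, pp1, pp2, cA, cB0, cB1, cB2]

lemma fB_t : fB (21/25) = 11/25 := by
  norm_num [fB, pp0, pp1, pp2, cA, cB0, cB1, cB2]

lemma fB_cont : Continuous fB := fB_contDiff.continuous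
lemma gB_cont : Continuous gB := gB_contDiff.continuous

lemma fB_hasDerivAt' (x : ℝ) : HasDerivAt fB (deriv fB x) x := by
  rw [fB_deriv]; exact fB_hasDerivAt x

lemma fB_strictMonoOn : StrictMonoOn fB unitI := by
  rw [unitI_def]
  apply strictMonoOn_of_deriv_pos (convex_Icc _ _) fB_cont.continuousOn
  intro x hx
  rw [interior_Icc, Set.mem_Ioo] at hx
  rw [fB_deriv]
  exact phiB_pos x ⟨hx.1.le, hx.2.le⟩

lemma gB_strictMonoOn : StrictMonoOn gB unitI := by
  intro x hx y hy hxy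
  rw [mem_unitI] at hx hy
  have h1 : (1-y) ∈ unitI := mem_unitI.mpr ⟨by linarith [hy.2], by linarith [hy.1]⟩
  have h2 : (1-x) ∈ unitI := mem_unitI.mpr ⟨by linarith [hx.2], by linarith [hx.1]⟩
  have := fB_strictMonoOn h1 h2 (by linarith)
  simp only [gB]
  linarith

/-- generic MVT upper bound -/
lemma sub_le_of_deriv_le {f : ℝ → ℝ} {a b c : ℝ} (hab : a ≤ b)
    (hd : ∀ x, HasDerivAt f (deriv f x) x)
    (hb : ∀ x, a < x → x < b → deriv f x ≤ c) : f b - f a ≤ c * (b - a) := by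
  rcases eq_or_lt_of_le hab with rfl | hab'
  · simp
  · obtain ⟨t, ht, hslope⟩ := exists_hasDerivAt_eq_slope f (deriv f) hab'
      (fun x _ => (hd x).differentiableAt.continuousAt.continuousWithinAt)
      (fun x _ => hd x)
    have h1 : (f b - f a) / (b - a) ≤ c := hslope ▸ hb t ht.1 ht.2
    have h2 : (0:ℝ) < b - a := by linarith
    calc f b - f a = (f b - f a)/(b-a) * (b-a) := by field_simp
    _ ≤ c * (b-a) := mul_le_mul_of_nonneg_right h1 h2.le

/-- generic MVT lower bound -/
lemma sub_ge_of_deriv_ge {f : ℝ → ℝ} {a b c : ℝ} (hab : a ≤ b)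
    (hd : ∀ x, HasDerivAt f (deriv f x) x)
    (hb : ∀ x, a < x → x < b → c ≤ deriv f x) : c * (b - a) ≤ f b - f a := by
  rcases eq_or_lt_of_le hab with rfl | hab'
  · simp
  · obtain ⟨t, ht, hslope⟩ := exists_hasDerivAt_eq_slope f (deriv f) hab'
      (fun x _ => (hd x).differentiableAt.continuousAt.continuousWithinAt)
      (fun x _ => hd x)
    have h1 : c ≤ (f b - f a) / (b - a) := hslope ▸ hb t ht.1 ht.2
    have h2 : (0:ℝ) < b - a := by linarith
    calc c * (b-a) ≤ (f b - f a)/(b-a) * (b-a) := mul_le_mul_of_nonneg_right h1 h2.le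
    _ = f b - f a := by field_simp

lemma one_mem_unitI : (1:ℝ) ∈ unitI := mem_unitI.mpr ⟨by norm_num, le_refl 1⟩
lemma zero_mem_unitI : (0:ℝ) ∈ unitI := mem_unitI.mpr ⟨le_refl 0, by norm_num⟩

lemma fB_lt_id : ∀ x ∈ Set.Ioo (0:ℝ) 1, fB x < x := by
  intro x hx
  rcases le_or_gt x (57/100) with h | h
  · have hb : fB x - fB 0 ≤ (97/100) * (x - 0) := by
      apply sub_le_of_deriv_le hx.1.le fB_hasDerivAt'
      intro z hz1 hz2
      rw [fB_deriv]
      exact phiB_le_low z ⟨hz1.le, by linarith⟩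
    rw [fB_zero] at hb
    nlinarith [hx.1]
  · have h1 : fB x < fB 1 := fB_strictMonoOn (mem_unitI.mpr ⟨hx.1.le, hx.2.le⟩)
      one_mem_unitI hx.2
    have h2 := nb_f1hi
    linarith

lemma fB_nonneg : ∀ x ∈ unitI, 0 ≤ fB x := by
  intro x hx
  rcases eq_or_lt_of_le (mem_unitI.mp hx).1 with h | h
  · rw [← h, fB_zero]
  · have := fB_strictMonoOn zero_mem_unitI hx h
    rw [fB_zero] at this
    exact this.le

lemma fB_le_f1 : ∀ x ∈ unitI, fB x ≤ fB 1 := by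
  intro x hx
  rcases eq_or_lt_of_le (mem_unitI.mp hx).2 with h | h
  · rw [h]
  · exact (fB_strictMonoOn hx one_mem_unitI h).le

lemma fB_mapsTo : Set.MapsTo fB unitI unitI := by
  intro x hx
  exact mem_unitI.mpr ⟨fB_nonneg x hx, le_trans (fB_le_f1 x hx) (by linarith [nb_f1hi])⟩

lemma gB_one : gB 1 = 1 := by simp [gB, fB_zero]

lemma gB_mapsTo : Set.MapsTo gB unitI unitI := by
  intro x hx
  rw [mem_unitI] at hx
  have h1 : (1-x) ∈ unitI := mem_unitI.mpr ⟨by linarith [hx.2], by linarith [hx.1]⟩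
  have h2 := fB_nonneg _ h1
  have h3 := fB_le_f1 _ h1
  have h4 := nb_f1hi
  rw [mem_unitI]
  constructor <;> simp only [gB] <;> linarith

lemma memA_base : MemA fB gB where
  f_maps := fB_mapsTo
  g_maps := gB_mapsTo
  f_c1 := fB_contDiff
  g_c1 := gB_contDiff
  f_inj := fB_strictMonoOn.injOn
  g_inj := gB_strictMonoOn.injOn
  f_deriv_ne := by
    intro x hx
    rw [fB_deriv]
    exact (phiB_pos x (mem_unitI.mp hx)).ne'
  g_deriv_ne := by
    intro x hx
    rw [mem_unitI] at hx
    rw [gB_deriv]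
    exact (phiB_pos (1-x) ⟨by linarith [hx.2], by linarith [hx.1]⟩).ne'
  f_zero := fB_zero
  g_one := gB_one
  f_lt_id := fB_lt_id
  id_lt_g := by
    intro x hx
    have h1 : (1-x) ∈ Set.Ioo (0:ℝ) 1 := ⟨by linarith [hx.2], by linarith [hx.1]⟩
    have := fB_lt_id _ h1
    simp only [gB]
    linarith
  g0_pos := by
    have := nb_f1hi
    simp only [gB]
    norm_num
    linarith
  g0_lt_f1 := by
    have := nb_f1lo
    simp only [gB]
    norm_num
    linarith
  f1_lt_one := by linarith [nb_f1hi]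



/-! ### The perturbative setting -/

def eps : ℝ := 1/1000000000

lemma eps_pos : 0 < eps := by norm_num [eps]

structure Good (F G : ℝ → ℝ) : Prop where
  A : MemA F G
  Fc : ∀ x ∈ unitI, |F x - fB x| ≤ eps
  Fd : ∀ x ∈ unitI, |deriv F x - phiB x| ≤ eps
  Gc : ∀ x ∈ unitI, |G x - gB x| ≤ eps
  Gd : ∀ x ∈ unitI, |deriv G x - phiB (1 - x)| ≤ eps

/-- image of a closed interval under a continuous monotone map -/
lemma image_Icc_mono {f : ℝ → ℝ} {a b : ℝ} (hab : a ≤ b) (hc : ContinuousOn f (Set.Icc a b))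
    (hm : MonotoneOn f (Set.Icc a b)) : f '' Set.Icc a b = Set.Icc (f a) (f b) := by
  apply Set.Subset.antisymm
  · rintro y ⟨x, hx, rfl⟩
    exact ⟨hm (Set.left_mem_Icc.mpr hab) hx hx.1, hm hx (Set.right_mem_Icc.mpr hab) hx.2⟩
  · exact intermediate_value_Icc hab hc

namespace Good

variable {F G : ℝ → ℝ}

lemma FhasD (h : Good F G) (x : ℝ) : HasDerivAt F (deriv F x) x :=
  ((h.A.f_c1.differentiable one_ne_zero) x).hasDerivAt
lemma GhasD (h : Good F G) (x : ℝ) : HasDerivAt G (deriv G x) x :=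
  ((h.A.g_c1.differentiable one_ne_zero) x).hasDerivAt
lemma Fcont (h : Good F G) : Continuous F := h.A.f_c1.continuous
lemma Gcont (h : Good F G) : Continuous G := h.A.g_c1.continuous

lemma memI_of (x : ℝ) (h1 : 0 ≤ x) (h2 : x ≤ 1) : x ∈ unitI := mem_unitI.mpr ⟨h1, h2⟩

lemma compl_mem {x : ℝ} (hx : x ∈ unitI) : (1 - x) ∈ unitI := by
  rw [mem_unitI] at hx ⊢; constructor <;> linarith [hx.1, hx.2]

lemma Fd_lo (h : Good F G) {x : ℝ} (hx : x ∈ unitI) : (1:ℝ)/25 ≤ deriv F x := by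
  have h1 := abs_le.mp (h.Fd x hx)
  have h2 : cA ≤ phiB x := phiB_ge_cA x hx
  have h3 := cA_lb
  have he : eps = 1/1000000000 := rfl
  linarith [h1.1]

lemma Gd_lo (h : Good F G) {x : ℝ} (hx : x ∈ unitI) : (1:ℝ)/25 ≤ deriv G x := by
  have h1 := abs_le.mp (h.Gd x hx)
  have h2 : cA ≤ phiB (1-x) := phiB_ge_cA (1-x) (compl_mem hx)
  have h3 := cA_lb
  have he : eps = 1/1000000000 := rfl
  linarith [h1.1]

lemma Fd_le_offcore (h : Good F G) {x : ℝ} (hx : x ∈ unitI)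
    (hout : x ∉ Set.Ioo (57/100:ℝ) (83/100)) : deriv F x ≤ 49/50 := by
  have h1 := abs_le.mp (h.Fd x hx)
  have h2 : phiB x ≤ 97/100 := phiB_le_offcore x hx hout
  have he : eps = 1/1000000000 := rfl
  linarith [h1.2]

lemma Gd_le_offcore (h : Good F G) {x : ℝ} (hx : x ∈ unitI)
    (hout : x ∉ Set.Ioo (17/100:ℝ) (43/100)) : deriv G x ≤ 49/50 := by
  have h1 := abs_le.mp (h.Gd x hx)
  have h2 : phiB (1-x) ≤ 97/100 := by
    apply phiB_le_offcore (1-x) (compl_mem hx)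
    rw [Set.mem_Ioo] at hout ⊢
    rw [mem_unitI] at hx
    intro hc
    exact hout ⟨by linarith [hc.2], by linarith [hc.1]⟩
  have he : eps = 1/1000000000 := rfl
  linarith [h1.2]

lemma FmonoI (h : Good F G) : StrictMonoOn F unitI := by
  rw [unitI_def]
  apply strictMonoOn_of_deriv_pos (convex_Icc _ _) h.Fcont.continuousOn
  intro x hx
  rw [interior_Icc, Set.mem_Ioo] at hx
  have := h.Fd_lo (memI_of x hx.1.le hx.2.le)
  linarith

lemma GmonoI (h : Good F G) : StrictMonoOn G unitI := by
  rw [unitI_def]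
  apply strictMonoOn_of_deriv_pos (convex_Icc _ _) h.Gcont.continuousOn
  intro x hx
  rw [interior_Icc, Set.mem_Ioo] at hx
  have := h.Gd_lo (memI_of x hx.1.le hx.2.le)
  linarith

/-! numeric anchors -/

lemma Fval_lo (h : Good F G) {x c : ℝ} (hx : x ∈ unitI) (hc : c ≤ fB x) : c - eps ≤ F x := by
  have := abs_le.mp (h.Fc x hx); linarith [this.1]
lemma Fval_hi (h : Good F G) {x c : ℝ} (hx : x ∈ unitI) (hc : fB x ≤ c) : F x ≤ c + eps := by
  have := abs_le.mp (h.Fc x hx); linarith [this.2]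
lemma Gval_lo (h : Good F G) {x c : ℝ} (hx : x ∈ unitI) (hc : c ≤ gB x) : c - eps ≤ G x := by
  have := abs_le.mp (h.Gc x hx); linarith [this.1]
lemma Gval_hi (h : Good F G) {x c : ℝ} (hx : x ∈ unitI) (hc : gB x ≤ c) : G x ≤ c + eps := by
  have := abs_le.mp (h.Gc x hx); linarith [this.2]

lemma fB_mono {a b : ℝ} (ha : a ∈ unitI) (hb : b ∈ unitI) (hab : a ≤ b) : fB a ≤ fB b := by
  rcases eq_or_lt_of_le hab with rfl | hlt
  · exact le_refl _
  · exact (fB_strictMonoOn ha hb hlt).le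

lemma F1_lo (h : Good F G) : 51012/100000 ≤ F 1 := by
  have := h.Fval_lo one_mem_unitI (le_refl (fB 1))
  have := nb_f1lo
  have he : eps = 1/1000000000 := rfl
  linarith
lemma F1_hi (h : Good F G) : F 1 ≤ 51015/100000 := by
  have := h.Fval_hi one_mem_unitI (le_refl (fB 1))
  have := nb_f1hi
  have he : eps = 1/1000000000 := rfl
  linarith
lemma F1_mem (h : Good F G) : F 1 ∈ unitI := h.A.f_maps one_mem_unitI
lemma G0_mem (h : Good F G) : G 0 ∈ unitI := h.A.g_maps zero_mem_unitI
lemma G0_lo (h : Good F G) : 48985/100000 ≤ G 0 := by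
  have h1 := h.Gval_lo zero_mem_unitI (le_refl (gB 0))
  have h2 : gB 0 = 1 - fB 1 := by simp [gB]
  have := nb_f1hi
  have he : eps = 1/1000000000 := rfl
  linarith
lemma G0_hi (h : Good F G) : G 0 ≤ 48988/100000 := by
  have h1 := h.Gval_hi zero_mem_unitI (le_refl (gB 0))
  have h2 : gB 0 = 1 - fB 1 := by simp [gB]
  have := nb_f1lo
  have he : eps = 1/1000000000 := rfl
  linarith

lemma F21_lo (h : Good F G) : 13563/100000 - 2*eps ≤ F (F 1) := by
  have h1 := h.Fval_lo h.F1_mem (le_refl (fB (F 1)))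
  have h2 : fB (12753/25000) ≤ fB (F 1) := by
    apply fB_mono (memI_of _ (by norm_num) (by norm_num)) h.F1_mem
    have := h.F1_lo; linarith
  have := nb_f21lo
  have he : eps = 1/1000000000 := rfl
  linarith
lemma F21_hi (h : Good F G) : F (F 1) ≤ 13567/100000 + 2*eps := by
  have h1 := h.Fval_hi h.F1_mem (le_refl (fB (F 1)))
  have h2 : fB (F 1) ≤ fB (10203/20000) := by
    apply fB_mono h.F1_mem (memI_of _ (by norm_num) (by norm_num))
    have := h.F1_hi; linarith
  have := nb_f21hi
  have he : eps = 1/1000000000 := rfl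
  linarith
lemma F21_mem (h : Good F G) : F (F 1) ∈ unitI := h.A.f_maps h.F1_mem
lemma G20_mem (h : Good F G) : G (G 0) ∈ unitI := h.A.g_maps h.G0_mem

lemma G20_lo (h : Good F G) : 86433/100000 - 2*eps ≤ G (G 0) := by
  have h1 := h.Gval_lo h.G0_mem (le_refl (gB (G 0)))
  have h2 : gB (G 0) = 1 - fB (1 - G 0) := rfl
  have h3 : fB (1 - G 0) ≤ fB (10203/20000) := by
    apply fB_mono (compl_mem h.G0_mem) (memI_of _ (by norm_num) (by norm_num))
    have := h.G0_lo; linarith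
  have := nb_f21hi
  have he : eps = 1/1000000000 := rfl
  linarith
lemma G20_hi (h : Good F G) : G (G 0) ≤ 86437/100000 + 2*eps := by
  have h1 := h.Gval_hi h.G0_mem (le_refl (gB (G 0)))
  have h2 : gB (G 0) = 1 - fB (1 - G 0) := rfl
  have h3 : fB (12753/25000) ≤ fB (1 - G 0) := by
    apply fB_mono (memI_of _ (by norm_num) (by norm_num)) (compl_mem h.G0_mem)
    have := h.G0_hi; linarith
  have := nb_f21lo
  have he : eps = 1/1000000000 := rfl
  linarith

lemma FG0_lt_F21 (h : Good F G) : F (G 0) < F (F 1) := by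
  have h1 := h.Fval_hi h.G0_mem (le_refl (fB (G 0)))
  have h2 : fB (G 0) ≤ fB (49/100) := by
    apply fB_mono h.G0_mem (memI_of _ (by norm_num) (by norm_num))
    have := h.G0_hi; linarith
  have h3 := h.F21_lo
  have := nb_e49hi
  have he : eps = 1/1000000000 := rfl
  linarith

/-! basic order facts -/
lemma So_holds (h : Good F G) : So F G := by
  constructor
  · have := h.F21_hi; have := h.G0_lo
    have he : eps = 1/1000000000 := rfl
    linarith
  · have := h.F1_hi; have := h.G20_lo
    have he : eps = 1/1000000000 := rfl
    linarith

/-! inverse function basics -/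

lemma F_image (h : Good F G) : F '' unitI = Set.Icc 0 (F 1) := by
  have := image_Icc_mono (by norm_num : (0:ℝ) ≤ 1) (h.Fcont.continuousOn)
    (fun a ha b hb hab => by
      rcases eq_or_lt_of_le hab with rfl | hlt
      · exact le_refl _
      · exact (h.FmonoI ha hb hlt).le)
  rw [unitI_def, this, h.A.f_zero]

lemma G_image (h : Good F G) : G '' unitI = Set.Icc (G 0) 1 := by
  have := image_Icc_mono (by norm_num : (0:ℝ) ≤ 1) (h.Gcont.continuousOn)
    (fun a ha b hb hab => by
      rcases eq_or_lt_of_le hab with rfl | hlt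
      · exact le_refl _
      · exact (h.GmonoI ha hb hlt).le)
  rw [unitI_def, this, h.A.g_one]

lemma invF_spec (h : Good F G) {y : ℝ} (hy1 : 0 ≤ y) (hy2 : y ≤ F 1) :
    Function.invFunOn F unitI y ∈ unitI ∧ F (Function.invFunOn F unitI y) = y := by
  have hex : ∃ a ∈ unitI, F a = y := by
    have : y ∈ F '' unitI := by rw [h.F_image]; exact ⟨hy1, hy2⟩
    obtain ⟨a, ha, hay⟩ := this
    exact ⟨a, ha, hay⟩
  exact ⟨Function.invFunOn_mem hex, Function.invFunOn_eq hex⟩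

lemma invG_spec (h : Good F G) {y : ℝ} (hy1 : G 0 ≤ y) (hy2 : y ≤ 1) :
    Function.invFunOn G unitI y ∈ unitI ∧ G (Function.invFunOn G unitI y) = y := by
  have hex : ∃ a ∈ unitI, G a = y := by
    have : y ∈ G '' unitI := by rw [h.G_image]; exact ⟨hy1, hy2⟩
    obtain ⟨a, ha, hay⟩ := this
    exact ⟨a, ha, hay⟩
  exact ⟨Function.invFunOn_mem hex, Function.invFunOn_eq hex⟩

lemma invF_eq (h : Good F G) {a y : ℝ} (ha : a ∈ unitI) (hay : F a = y) :
    Function.invFunOn F unitI y = a := by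
  have hex : ∃ b ∈ unitI, F b = y := ⟨a, ha, hay⟩
  exact h.A.f_inj (Function.invFunOn_mem hex) ha (by rw [Function.invFunOn_eq hex, hay])

lemma invG_eq (h : Good F G) {a y : ℝ} (ha : a ∈ unitI) (hay : G a = y) :
    Function.invFunOn G unitI y = a := by
  have hex : ∃ b ∈ unitI, G b = y := ⟨a, ha, hay⟩
  exact h.A.g_inj (Function.invFunOn_mem hex) ha (by rw [Function.invFunOn_eq hex, hay])

end Good



structure Holes (F G : ℝ → ℝ) (cp cq : ℝ) : Prop where
  good : Good F G
  hp1 : 15/100 ≤ cp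
  hp2 : cp ≤ 17/100
  hq1 : 43/100 ≤ cq
  hq2 : cq ≤ 45/100
  fixp : F (G cp) = cp
  fixq : F (G cq) = cq

namespace Good

variable {F G : ℝ → ℝ}

lemma sign_p1 (h : Good F G) : (15:ℝ)/100 < F (G (15/100)) := by
  have hm : (15:ℝ)/100 ∈ unitI := memI_of _ (by norm_num) (by norm_num)
  have h1 : gB (15/100) = 1 - fB (17/20) := by simp only [gB]; norm_num
  have h2 : (55603:ℝ)/100000 ≤ gB (15/100) := by rw [h1]; linarith [nb_e85hi]
  have h3 := h.Gval_lo hm (le_refl (gB (15/100)))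
  have he : eps = 1/1000000000 := rfl
  have h4 : (27801:ℝ)/50000 ≤ G (15/100) := by linarith
  have h5 : fB ((27801:ℝ)/50000) ≤ fB (G (15/100)) :=
    fB_mono (memI_of _ (by norm_num) (by norm_num)) (h.A.g_maps hm) h4
  have h6 := h.Fval_lo (h.A.g_maps hm) (le_refl (fB (G (15/100))))
  have h7 := nb_hp1lo
  linarith

lemma sign_p2 (h : Good F G) : F (G (17/100)) < (17:ℝ)/100 := by
  have hm : (17:ℝ)/100 ∈ unitI := memI_of _ (by norm_num) (by norm_num)
  have h1 : gB (17/100) = 1 - fB (83/100) := by simp only [gB]; norm_num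
  have h2 : gB (17/100) ≤ (14107:ℝ)/25000 - eps := by
    rw [h1]
    have he : eps = 1/1000000000 := rfl
    linarith [nb_e83lo]
  have h3 := h.Gval_hi hm (le_refl (gB (17/100)))
  have h4 : G (17/100) ≤ (14107:ℝ)/25000 := by linarith
  have h5 : fB (G (17/100)) ≤ fB ((14107:ℝ)/25000) :=
    fB_mono (h.A.g_maps hm) (memI_of _ (by norm_num) (by norm_num)) h4
  have h6 := h.Fval_hi (h.A.g_maps hm) (le_refl (fB (G (17/100))))
  have h7 := nb_hp2hi
  have he : eps = 1/1000000000 := rfl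
  linarith

lemma sign_q1 (h : Good F G) : (43:ℝ)/100 < F (G (43/100)) := by
  have hm : (43:ℝ)/100 ∈ unitI := memI_of _ (by norm_num) (by norm_num)
  have h1 : gB (43/100) = 1 - fB (57/100) := by simp only [gB]; norm_num
  have h2 : (8337:ℝ)/10000 + eps ≤ gB (43/100) := by
    rw [h1]
    have he : eps = 1/1000000000 := rfl
    linarith [nb_e57hi]
  have h3 := h.Gval_lo hm (le_refl (gB (43/100)))
  have h4 : (8337:ℝ)/10000 ≤ G (43/100) := by linarith
  have h5 : fB ((8337:ℝ)/10000) ≤ fB (G (43/100)) :=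
    fB_mono (memI_of _ (by norm_num) (by norm_num)) (h.A.g_maps hm) h4
  have h6 := h.Fval_lo (h.A.g_maps hm) (le_refl (fB (G (43/100))))
  have h7 := nb_hq1lo
  have he : eps = 1/1000000000 := rfl
  linarith

lemma sign_q2 (h : Good F G) : F (G (45/100)) < (45:ℝ)/100 := by
  have hm : (45:ℝ)/100 ∈ unitI := memI_of _ (by norm_num) (by norm_num)
  have h1 : gB (45/100) = 1 - fB (11/20) := by simp only [gB]; norm_num
  have h2 : gB (45/100) ≤ (3383:ℝ)/4000 - eps := by
    rw [h1]
    have he : eps = 1/1000000000 := rfl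
    linarith [nb_e55lo]
  have h3 := h.Gval_hi hm (le_refl (gB (45/100)))
  have h4 : G (45/100) ≤ (3383:ℝ)/4000 := by linarith
  have h5 : fB (G (45/100)) ≤ fB ((3383:ℝ)/4000) :=
    fB_mono (h.A.g_maps hm) (memI_of _ (by norm_num) (by norm_num)) h4
  have h6 := h.Fval_hi (h.A.g_maps hm) (le_refl (fB (G (45/100))))
  have h7 := nb_hq2hi
  have he : eps = 1/1000000000 := rfl
  linarith

lemma exists_fix (h : Good F G) {a b : ℝ} (ha : a ∈ unitI) (hb : b ∈ unitI) (hab : a ≤ b)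
    (hsa : a < F (G a)) (hsb : F (G b) < b) : ∃ c, a ≤ c ∧ c ≤ b ∧ F (G c) = c := by
  set k : ℝ → ℝ := fun x => F (G x) - x with hk
  have hc : ContinuousOn k (Set.Icc a b) :=
    ((h.Fcont.comp h.Gcont).sub continuous_id).continuousOn
  have h0 : (0:ℝ) ∈ Set.Icc (k b) (k a) := by
    simp only [hk, Set.mem_Icc]
    constructor <;> [linarith; linarith]
  obtain ⟨c, hc1, hc2⟩ := intermediate_value_Icc' hab hc h0
  refine ⟨c, hc1.1, hc1.2, ?_⟩
  have : F (G c) - c = 0 := hc2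
  linarith

lemma exists_holes (h : Good F G) : ∃ cp cq, Holes F G cp cq := by
  obtain ⟨cp, hcp1, hcp2, hcpf⟩ := h.exists_fix (memI_of (15/100) (by norm_num) (by norm_num))
    (memI_of (17/100) (by norm_num) (by norm_num)) (by norm_num) h.sign_p1 h.sign_p2
  obtain ⟨cq, hcq1, hcq2, hcqf⟩ := h.exists_fix (memI_of (43/100) (by norm_num) (by norm_num))
    (memI_of (45/100) (by norm_num) (by norm_num)) (by norm_num) h.sign_q1 h.sign_q2
  exact ⟨cp, cq, ⟨h, hcp1, hcp2, hcq1, hcq2, hcpf, hcqf⟩⟩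

end Good

namespace Holes

variable {F G : ℝ → ℝ} {cp cq : ℝ}

lemma cp_mem (H : Holes F G cp cq) : cp ∈ unitI :=
  Good.memI_of _ (by linarith [H.hp1]) (by linarith [H.hp2])
lemma cq_mem (H : Holes F G cp cq) : cq ∈ unitI :=
  Good.memI_of _ (by linarith [H.hq1]) (by linarith [H.hq2])
lemma Gp_mem (H : Holes F G cp cq) : G cp ∈ unitI := H.good.A.g_maps H.cp_mem
lemma Gq_mem (H : Holes F G cp cq) : G cq ∈ unitI := H.good.A.g_maps H.cq_mem

lemma Gp_lo (H : Holes F G cp cq) : 55602/100000 ≤ G cp := by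
  have h1 : G (15/100) ≤ G cp := by
    rcases eq_or_lt_of_le H.hp1 with heq | hlt
    · rw [heq]
    · exact (H.good.GmonoI (Good.memI_of _ (by norm_num) (by norm_num)) H.cp_mem hlt).le
  have h2 : gB (15/100) = 1 - fB (17/20) := by simp only [gB]; norm_num
  have h3 := H.good.Gval_lo (Good.memI_of (15/100) (by norm_num) (by norm_num))
    (le_refl (gB (15/100)))
  have he : eps = 1/1000000000 := rfl
  have := nb_e85hi
  linarith

lemma Gp_hi (H : Holes F G cp cq) : G cp ≤ 56428/100000 := by
  have h1 : G cp ≤ G (17/100) := by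
    rcases eq_or_lt_of_le H.hp2 with heq | hlt
    · rw [heq]
    · exact (H.good.GmonoI H.cp_mem (Good.memI_of _ (by norm_num) (by norm_num)) hlt).le
  have h2 : gB (17/100) = 1 - fB (83/100) := by simp only [gB]; norm_num
  have h3 := H.good.Gval_hi (Good.memI_of (17/100) (by norm_num) (by norm_num))
    (le_refl (gB (17/100)))
  have he : eps = 1/1000000000 := rfl
  have := nb_e83lo
  linarith

lemma Gq_lo (H : Holes F G cp cq) : 83370/100000 ≤ G cq := by
  have h1 : G (43/100) ≤ G cq := by
    rcases eq_or_lt_of_le H.hq1 with heq | hlt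
    · rw [heq]
    · exact (H.good.GmonoI (Good.memI_of _ (by norm_num) (by norm_num)) H.cq_mem hlt).le
  have h2 : gB (43/100) = 1 - fB (57/100) := by simp only [gB]; norm_num
  have h3 := H.good.Gval_lo (Good.memI_of (43/100) (by norm_num) (by norm_num))
    (le_refl (gB (43/100)))
  have he : eps = 1/1000000000 := rfl
  have := nb_e57hi
  linarith

lemma Gq_hi (H : Holes F G cp cq) : G cq ≤ 84575/100000 := by
  have h1 : G cq ≤ G (45/100) := by
    rcases eq_or_lt_of_le H.hq2 with heq | hlt
    · rw [heq]
    · exact (H.good.GmonoI H.cq_mem (Good.memI_of _ (by norm_num) (by norm_num)) hlt).le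
  have h2 : gB (45/100) = 1 - fB (11/20) := by simp only [gB]; norm_num
  have h3 := H.good.Gval_hi (Good.memI_of (45/100) (by norm_num) (by norm_num))
    (le_refl (gB (45/100)))
  have he : eps = 1/1000000000 := rfl
  have := nb_e55lo
  linarith

lemma cp_lt_cq (H : Holes F G cp cq) : cp < cq := by
  have := H.hp2; have := H.hq1; linarith

lemma Gp_lt_Gq (H : Holes F G cp cq) : G cp < G cq :=
  H.good.GmonoI H.cp_mem H.cq_mem H.cp_lt_cq

/-- exactness: outside the hole, the inverse stays outside the other hole -/
lemma invF_not_in_Hg (H : Holes F G cp cq) {x : ℝ} (hx1 : 0 ≤ x) (hx2 : x ≤ F 1)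
    (hx3 : x ∉ Set.Icc cp cq) : Function.invFunOn F unitI x ∉ Set.Icc (G cp) (G cq) := by
  intro hc
  apply hx3
  obtain ⟨hmem, hFx⟩ := H.good.invF_spec hx1 hx2
  have h1 : F (G cp) ≤ F (Function.invFunOn F unitI x) := by
    rcases eq_or_lt_of_le hc.1 with heq | hlt
    · rw [heq]
    · exact (H.good.FmonoI H.Gp_mem hmem hlt).le
  have h2 : F (Function.invFunOn F unitI x) ≤ F (G cq) := by
    rcases eq_or_lt_of_le hc.2 with heq | hlt
    · rw [← heq]
    · exact (H.good.FmonoI hmem H.Gq_mem hlt).le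
  rw [hFx, H.fixp, H.fixq] at *
  exact ⟨h1, h2⟩

lemma invG_not_in_Hf (H : Holes F G cp cq) {y : ℝ} (hy1 : G 0 ≤ y) (hy2 : y ≤ 1)
    (hy3 : y ∉ Set.Icc (G cp) (G cq)) : Function.invFunOn G unitI y ∉ Set.Icc cp cq := by
  intro hc
  apply hy3
  obtain ⟨hmem, hGy⟩ := H.good.invG_spec hy1 hy2
  have h1 : G cp ≤ G (Function.invFunOn G unitI y) := by
    rcases eq_or_lt_of_le hc.1 with heq | hlt
    · rw [heq]
    · exact (H.good.GmonoI H.cp_mem hmem hlt).le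
  have h2 : G (Function.invFunOn G unitI y) ≤ G cq := by
    rcases eq_or_lt_of_le hc.2 with heq | hlt
    · rw [← heq]
    · exact (H.good.GmonoI hmem H.cq_mem hlt).le
  rw [hGy] at h1 h2
  exact ⟨h1, h2⟩

/-- off-hole derivative bound for `F` -/
lemma Fd_le_nothole (H : Holes F G cp cq) {z : ℝ} (hz : z ∈ unitI)
    (hno : z ∉ Set.Icc (G cp) (G cq)) : deriv F z ≤ 49/50 := by
  apply H.good.Fd_le_offcore hz
  intro hc
  apply hno
  have := H.Gp_hi; have := H.Gq_lo
  exact ⟨by linarith [hc.1], by linarith [hc.2]⟩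

/-- off-hole derivative bound for `G` -/
lemma Gd_le_nothole (H : Holes F G cp cq) {z : ℝ} (hz : z ∈ unitI)
    (hno : z ∉ Set.Icc cp cq) : deriv G z ≤ 49/50 := by
  apply H.good.Gd_le_offcore hz
  intro hc
  apply hno
  have := H.hp2; have := H.hq1
  exact ⟨by linarith [hc.1], by linarith [hc.2]⟩

end Holes



open Topology Filter

/-- the backward chain for `calF` -/
def psiF (F G : ℝ → ℝ) (k : ℕ) (x : ℝ) : ℝ :=
  (Function.invFunOn G unitI)^[k] (Function.invFunOn F unitI x)

lemma psiF_zero (F G : ℝ → ℝ) (x : ℝ) : psiF F G 0 x = Function.invFunOn F unitI x := rfl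

lemma psiF_succ (F G : ℝ → ℝ) (k : ℕ) (x : ℝ) :
    psiF F G (k+1) x = Function.invFunOn G unitI (psiF F G k x) := by
  simp only [psiF, Function.iterate_succ_apply']

lemma Gint_eq (G : ℝ → ℝ) : Gint G 1 = Set.Icc (G 0) (G (G 0)) := by
  have h1 : G^[1] (0:ℝ) = G 0 := by rw [Function.iterate_one]
  have h2 : G^[1+1] (0:ℝ) = G (G 0) := by
    rw [Function.iterate_succ_apply', Function.iterate_one]
  rw [Gint, h1, h2]

lemma Fint_eq (F : ℝ → ℝ) : Fint F 1 = Set.Icc (F (F 1)) (F 1) := by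
  have h1 : F^[1] (1:ℝ) = F 1 := by rw [Function.iterate_one]
  have h2 : F^[1+1] (1:ℝ) = F (F 1) := by
    rw [Function.iterate_succ_apply', Function.iterate_one]
  rw [Fint, h1, h2]

lemma calF_def (F G : ℝ → ℝ) (x : ℝ) :
    calF F G x = psiF F G (sInf {n | psiF F G n x ∈ Set.Icc (G 0) (G (G 0))}) x := by
  rw [show calF F G x = psiF F G (sInf {n | psiF F G n x ∈ Gint G 1}) x from rfl, Gint_eq]

namespace Good

variable {F G : ℝ → ℝ}

lemma G0_pos' (h : Good F G) : 0 < G 0 := h.A.g0_pos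
lemma G0_lt_one (h : Good F G) : G 0 < 1 := lt_trans h.A.g0_lt_f1 h.A.f1_lt_one
lemma G0_lt_G20 (h : Good F G) : G 0 < G (G 0) :=
  h.A.id_lt_g (G 0) ⟨h.G0_pos', h.G0_lt_one⟩

/-- chain facts at a point, given that the chain has stayed above the entry zone -/
lemma chainF (h : Good F G) {x : ℝ} (hx0 : F (G 0) < x) (hx1 : x < F 1) :
    ∀ k : ℕ, (∀ j < k, G (G 0) < psiF F G j x) →
      (G 0 < psiF F G k x ∧ psiF F G k x < 1 ∧ psiF F G k x ∈ unitI ∧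
        G^[k] (psiF F G k x) = Function.invFunOn F unitI x) := by
  have hx0' : (0:ℝ) ≤ x :=
    le_trans (mem_unitI.mp (h.A.f_maps h.G0_mem)).1 hx0.le
  obtain ⟨hmem, hFi⟩ := h.invF_spec hx0' hx1.le
  intro k
  induction k with
  | zero =>
    intro _
    rw [psiF_zero]
    have h1 : G 0 < Function.invFunOn F unitI x := by
      by_contra hle
      push_neg at hle
      rcases eq_or_lt_of_le hle with heq | hlt
      · rw [← heq, hFi] at hx0; exact lt_irrefl _ hx0
      · have := h.FmonoI hmem h.G0_mem hlt
        rw [hFi] at this; linarith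
    have h2 : Function.invFunOn F unitI x < 1 := by
      by_contra hle
      push_neg at hle
      have heq : Function.invFunOn F unitI x = 1 :=
        le_antisymm (mem_unitI.mp hmem).2 hle
      rw [heq] at hFi; rw [hFi] at hx1; exact lt_irrefl _ hx1
    exact ⟨h1, h2, hmem, by rw [Function.iterate_zero_apply]⟩
  | succ k ih =>
    intro hj
    have hk := ih (fun j hjk => hj j (lt_trans hjk k.lt_succ_self))
    have hkk : G (G 0) < psiF F G k x := hj k k.lt_succ_self
    have hga : G 0 ≤ psiF F G k x := le_trans h.G0_lt_G20.le hkk.le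
    obtain ⟨hmem2, hGi⟩ := h.invG_spec hga hk.2.1.le
    rw [psiF_succ] at *
    have h1 : G 0 < Function.invFunOn G unitI (psiF F G k x) := by
      by_contra hle
      push_neg at hle
      rcases eq_or_lt_of_le hle with heq | hlt
      · rw [← heq, hGi] at hkk; exact lt_irrefl _ hkk
      · have := h.GmonoI hmem2 h.G0_mem hlt
        rw [hGi] at this; linarith
    have h2 : Function.invFunOn G unitI (psiF F G k x) < 1 := by
      by_contra hle
      push_neg at hle
      have heq : Function.invFunOn G unitI (psiF F G k x) = 1 :=
        le_antisymm (mem_unitI.mp hmem2).2 hle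
      rw [heq, h.A.g_one] at hGi
      rw [← hGi] at hk
      exact lt_irrefl _ hk.2.1
    refine ⟨h1, h2, hmem2, ?_⟩
    rw [Function.iterate_succ_apply, hGi, hk.2.2.2]

lemma TF_nonempty (h : Good F G) {x : ℝ} (hx0 : F (G 0) < x) (hx1 : x < F 1) :
    ∃ n, psiF F G n x ≤ G (G 0) := by
  by_contra hno
  push_neg at hno
  have hch : ∀ k, G 0 < psiF F G k x ∧ psiF F G k x < 1 ∧ psiF F G k x ∈ unitI ∧
      G^[k] (psiF F G k x) = Function.invFunOn F unitI x :=
    fun k => h.chainF hx0 hx1 k (fun j _ => hno j)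
  have hstep : ∀ k, G (psiF F G (k+1) x) = psiF F G k x := by
    intro k
    have hga : G 0 ≤ psiF F G k x := le_trans h.G0_lt_G20.le (hno k).le
    obtain ⟨_, hGi⟩ := h.invG_spec hga (hch k).2.1.le
    rw [psiF_succ]; exact hGi
  have hdec : ∀ k, psiF F G (k+1) x < psiF F G k x := by
    intro k
    have h1 := (hch (k+1)).1
    have h2 := (hch (k+1)).2.1
    have h3 := h.A.id_lt_g (psiF F G (k+1) x) ⟨lt_trans h.G0_pos' h1, h2⟩
    rw [hstep k] at h3; exact h3
  have hanti : Antitone (fun k => psiF F G k x) :=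
    antitone_nat_of_succ_le (fun k => (hdec k).le)
  have hbdd : BddBelow (Set.range fun k => psiF F G k x) :=
    ⟨G (G 0), by rintro y ⟨k, rfl⟩; exact (hno k).le⟩
  have hlim := tendsto_atTop_ciInf hanti hbdd
  set c := ⨅ k, psiF F G k x with hc
  have hc_ge : G (G 0) ≤ c := le_ciInf (fun k => (hno k).le)
  have hc_le : c ≤ psiF F G 0 x := ciInf_le hbdd 0
  have hc_lt1 : c < 1 := lt_of_le_of_lt hc_le (hch 0).2.1
  have h2 : Filter.Tendsto (fun k => psiF F G (k+1) x) Filter.atTop (𝓝 c) :=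
    hlim.comp (Filter.tendsto_add_atTop_nat 1)
  have h3 : Filter.Tendsto (fun k => G (psiF F G (k+1) x)) Filter.atTop (𝓝 (G c)) :=
    (h.Gcont.continuousAt.tendsto).comp h2
  have h4 : (fun k => G (psiF F G (k+1) x)) = fun k => psiF F G k x :=
    funext fun k => hstep k
  rw [h4] at h3
  have hGc : G c = c := tendsto_nhds_unique h3 hlim
  have hc0 : 0 < c := lt_of_lt_of_le (lt_trans h.G0_pos' h.G0_lt_G20) hc_ge
  exact absurd hGc (ne_of_gt (h.A.id_lt_g c ⟨hc0, hc_lt1⟩))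

lemma calF_branch_value (h : Good F G) {x : ℝ} {N : ℕ}
    (hmem : psiF F G N x ∈ Set.Icc (G 0) (G (G 0)))
    (hjs : ∀ j < N, G (G 0) < psiF F G j x) : calF F G x = psiF F G N x := by
  rw [calF_def]
  congr 1
  apply le_antisymm (Nat.sInf_le hmem)
  by_contra hlt
  push_neg at hlt
  have hne : {n | psiF F G n x ∈ Set.Icc (G 0) (G (G 0))}.Nonempty := ⟨N, hmem⟩
  have hmem2 := Nat.sInf_mem hne
  have := hjs _ hlt
  exact absurd hmem2.2 (not_le.mpr this)

lemma branchF (h : Good F G) {x : ℝ} (hx0 : F (G 0) < x) (hx1 : x < F 1) :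
    ∃ N : ℕ, (∀ j < N, G (G 0) < psiF F G j x) ∧
      G 0 < psiF F G N x ∧ psiF F G N x ≤ G (G 0) ∧
      G^[N] (psiF F G N x) = Function.invFunOn F unitI x ∧
      calF F G x = psiF F G N x := by
  obtain ⟨n0, hn0⟩ := h.TF_nonempty hx0 hx1
  have hTne : {n | psiF F G n x ≤ G (G 0)}.Nonempty := ⟨n0, hn0⟩
  set N := sInf {n | psiF F G n x ≤ G (G 0)} with hN
  have hNm : psiF F G N x ≤ G (G 0) := Nat.sInf_mem hTne
  have hjlt : ∀ j < N, G (G 0) < psiF F G j x := by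
    intro j hj
    by_contra hc
    push_neg at hc
    exact Nat.notMem_of_lt_sInf hj hc
  have hch := h.chainF hx0 hx1 N hjlt
  exact ⟨N, hjlt, hch.1, hNm, hch.2.2.2, h.calF_branch_value ⟨hch.1.le, hNm⟩ hjlt⟩

lemma calF_F1 (h : Good F G) : calF F G (F 1) = 1 := by
  have hinv : Function.invFunOn F unitI (F 1) = 1 := h.invF_eq one_mem_unitI rfl
  have hG1 : Function.invFunOn G unitI 1 = 1 := h.invG_eq one_mem_unitI h.A.g_one
  have hiter : ∀ n, psiF F G n (F 1) = 1 := by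
    intro n
    induction n with
    | zero => rw [psiF_zero, hinv]
    | succ k ih => rw [psiF_succ, ih, hG1]
  have hempty : {n | psiF F G n (F 1) ∈ Set.Icc (G 0) (G (G 0))} = ∅ := by
    ext n
    simp only [Set.mem_setOf_eq, Set.mem_empty_iff_false, iff_false]
    rw [hiter n]
    intro hc
    have h1 := h.G20_hi
    have he : eps = 1/1000000000 := rfl
    have := hc.2
    linarith
  rw [calF_def, hempty, Nat.sInf_empty, hiter 0]

end Good

/-- auxiliary: positive lower bound on finitely many positive reals -/
lemma exists_pos_min (P : ℕ → ℝ) : ∀ (N : ℕ), (∀ j < N, 0 < P j) →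
    ∃ δ, 0 < δ ∧ ∀ j < N, δ ≤ P j := by
  intro N
  induction N with
  | zero => exact fun _ => ⟨1, one_pos, fun j hj => absurd hj (Nat.not_lt_zero j)⟩
  | succ n ih =>
    intro hP
    obtain ⟨δ, hδ, hle⟩ := ih (fun j hj => hP j (lt_trans hj n.lt_succ_self))
    refine ⟨min δ (P n), lt_min hδ (hP n n.lt_succ_self), fun j hj => ?_⟩
    rcases Nat.lt_succ_iff_lt_or_eq.mp hj with h' | rfl
    · exact le_trans (min_le_left _ _) (hle j h')
    · exact min_le_right _ _



open Topology Filter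

namespace Holes

variable {F G : ℝ → ℝ} {cp cq : ℝ}

lemma slopeF (H : Holes F G cp cq) {y : ℝ} (hy0 : F (G 0) < y) (hy1 : y < F 1)
    (hyH : y ∉ Set.Icc cp cq) :
    ∃ δ, 0 < δ ∧ ∀ x, y - δ < x → x < y →
      calF F G x < calF F G y ∧ y - x ≤ (49/50) * (calF F G y - calF F G x) := by
  have h := H.good
  obtain ⟨N, hjlt, hNlo, hNhi, hfwd, hcal⟩ := h.branchF hy0 hy1
  have hchy : ∀ k, k ≤ N → (G 0 < psiF F G k y ∧ psiF F G k y < 1 ∧ psiF F G k y ∈ unitI ∧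
      G^[k] (psiF F G k y) = Function.invFunOn F unitI y) :=
    fun k hk => h.chainF hy0 hy1 k (fun j hj => hjlt j (lt_of_lt_of_le hj hk))
  have hy0' : (0:ℝ) ≤ y := le_trans (mem_unitI.mp (h.A.f_maps h.G0_mem)).1 hy0.le
  have huH : Function.invFunOn F unitI y ∉ Set.Icc (G cp) (G cq) :=
    H.invF_not_in_Hg hy0' hy1.le hyH
  have huspec := h.invF_spec hy0' hy1.le
  obtain ⟨δ₁, hδ₁, hδ₁le⟩ := exists_pos_min
    (fun j => (psiF F G j y - G (G 0)) * (1/25)^(j+1)) N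
    (fun j hj => mul_pos (by linarith [hjlt j hj]) (by positivity))
  set δ₂ : ℝ := if G cq < Function.invFunOn F unitI y
    then (Function.invFunOn F unitI y - G cq) * (1/25) else 1 with hδ₂def
  have hδ₂pos : 0 < δ₂ := by
    rw [hδ₂def]; split_ifs with hc
    · exact mul_pos (by linarith) (by norm_num)
    · norm_num
  refine ⟨min (min δ₁ δ₂) (y - F (G 0)), lt_min (lt_min hδ₁ hδ₂pos) (by linarith), ?_⟩
  intro x hx1 hx2
  have hmin1 := min_le_left (min δ₁ δ₂) (y - F (G 0))
  have hmin2 := min_le_right (min δ₁ δ₂) (y - F (G 0))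
  have hmin3 := min_le_left δ₁ δ₂
  have hmin4 := min_le_right δ₁ δ₂
  have hx0 : F (G 0) < x := by linarith
  have hδx1 : y - x < δ₁ := by linarith
  have hδx2 : y - x < δ₂ := by linarith
  have hx1' : x < F 1 := lt_trans hx2 hy1
  have hx0' : (0:ℝ) ≤ x := le_trans (mem_unitI.mp (h.A.f_maps h.G0_mem)).1 hx0.le
  have hxspec := h.invF_spec hx0' hx1'.le
  have hyx : 0 < y - x := by linarith
  -- key comparison induction
  have key : ∀ k, k ≤ N →
      (psiF F G k x < psiF F G k y ∧
       psiF F G k y - psiF F G k x ≤ (y - x) * 25^(k+1) ∧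
       psiF F G k x ∈ unitI ∧ G 0 < psiF F G k x ∧
       (k < N → G (G 0) < psiF F G k x)) := by
    intro k
    induction k with
    | zero =>
      intro hkN
      have hlt : psiF F G 0 x < psiF F G 0 y := by
        rw [psiF_zero, psiF_zero]
        by_contra hle
        push_neg at hle
        have : F (Function.invFunOn F unitI y) ≤ F (Function.invFunOn F unitI x) := by
          rcases eq_or_lt_of_le hle with heq | hlt'
          · rw [heq]
          · exact (h.FmonoI huspec.1 hxspec.1 hlt').le
        rw [hxspec.2, huspec.2] at this
        linarith
      have hdelta : psiF F G 0 y - psiF F G 0 x ≤ (y - x) * 25^(0+1) := by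
        have hmvt : (1/25) * (psiF F G 0 y - psiF F G 0 x) ≤
            F (psiF F G 0 y) - F (psiF F G 0 x) := by
          apply sub_ge_of_deriv_ge hlt.le h.FhasD
          intro z hz1 hz2
          apply h.Fd_lo
          refine Good.memI_of z ?_ ?_
          · rw [psiF_zero] at hz1
            exact le_trans (mem_unitI.mp hxspec.1).1 hz1.le
          · rw [psiF_zero] at hz2
            exact le_trans hz2.le (mem_unitI.mp huspec.1).2
        have e1 : F (psiF F G 0 y) = y := by rw [psiF_zero]; exact huspec.2
        have e2 : F (psiF F G 0 x) = x := by rw [psiF_zero]; exact hxspec.2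
        rw [e1, e2] at hmvt
        rw [pow_one]
        linarith
      have hG0lt : G 0 < psiF F G 0 x := by
        rw [psiF_zero]
        by_contra hle
        push_neg at hle
        have : F (Function.invFunOn F unitI x) ≤ F (G 0) := by
          rcases eq_or_lt_of_le hle with heq | hlt'
          · rw [heq]
          · exact (h.FmonoI hxspec.1 h.G0_mem hlt').le
        rw [hxspec.2] at this
        linarith
      refine ⟨hlt, hdelta, by rw [psiF_zero]; exact hxspec.1, hG0lt, ?_⟩
      intro hN0
      have hm : δ₁ ≤ (psiF F G 0 y - G (G 0)) * (1/25)^(0+1) := hδ₁le 0 hN0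
      have h25 : (y - x) * 25 < psiF F G 0 y - G (G 0) := by
        have hmul := mul_lt_mul_of_pos_right (lt_of_lt_of_le hδx1 hm)
          (by norm_num : (0:ℝ) < 25)
        calc (y-x)*25 < ((psiF F G 0 y - G (G 0)) * (1/25)^(0+1)) * 25 := hmul
        _ = psiF F G 0 y - G (G 0) := by ring
      rw [pow_one] at hdelta
      linarith
    | succ k ih =>
      intro hkN
      have hkN' : k < N := hkN
      obtain ⟨hltk, hdk, hmemk, hG0k, hbigk⟩ := ih hkN'.le
      have hbig : G (G 0) < psiF F G k x := hbigk hkN'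
      have hchky := hchy k hkN'.le
      have hgax : G 0 ≤ psiF F G k x := le_trans h.G0_lt_G20.le hbig.le
      have hgay : G 0 ≤ psiF F G k y := le_trans h.G0_lt_G20.le (hjlt k hkN').le
      have hxle1 : psiF F G k x ≤ 1 := le_trans hltk.le hchky.2.1.le
      obtain ⟨hmx, hGx⟩ := h.invG_spec hgax hxle1
      obtain ⟨hmy, hGy⟩ := h.invG_spec hgay hchky.2.1.le
      have hlt1 : psiF F G (k+1) x < psiF F G (k+1) y := by
        rw [psiF_succ, psiF_succ]
        by_contra hle
        push_neg at hle
        have : G (Function.invFunOn G unitI (psiF F G k y)) ≤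
            G (Function.invFunOn G unitI (psiF F G k x)) := by
          rcases eq_or_lt_of_le hle with heq | hlt'
          · rw [heq]
          · exact (h.GmonoI hmy hmx hlt').le
        rw [hGx, hGy] at this
        linarith
      have hdelta1 : psiF F G (k+1) y - psiF F G (k+1) x ≤ (y - x) * 25^(k+1+1) := by
        have hmvt : (1/25) * (psiF F G (k+1) y - psiF F G (k+1) x) ≤
            G (psiF F G (k+1) y) - G (psiF F G (k+1) x) := by
          apply sub_ge_of_deriv_ge hlt1.le h.GhasD
          intro z hz1 hz2
          apply h.Gd_lo
          refine Good.memI_of z ?_ ?_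
          · rw [psiF_succ] at hz1
            exact le_trans (mem_unitI.mp hmx).1 hz1.le
          · rw [psiF_succ] at hz2
            exact le_trans hz2.le (mem_unitI.mp hmy).2
        have e1 : G (psiF F G (k+1) y) = psiF F G k y := by rw [psiF_succ, hGy]
        have e2 : G (psiF F G (k+1) x) = psiF F G k x := by rw [psiF_succ, hGx]
        rw [e1, e2] at hmvt
        have hnn : 0 ≤ psiF F G (k+1) y - psiF F G (k+1) x := by linarith [hlt1]
        calc psiF F G (k+1) y - psiF F G (k+1) x
            ≤ 25 * (psiF F G k y - psiF F G k x) := by linarith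
        _ ≤ 25 * ((y-x) * 25^(k+1)) := by
            apply mul_le_mul_of_nonneg_left hdk (by norm_num)
        _ = (y - x) * 25^(k+1+1) := by ring
      have hG0lt : G 0 < psiF F G (k+1) x := by
        rw [psiF_succ]
        by_contra hle
        push_neg at hle
        have : G (Function.invFunOn G unitI (psiF F G k x)) ≤ G (G 0) := by
          rcases eq_or_lt_of_le hle with heq | hlt'
          · rw [heq]
          · exact (h.GmonoI hmx h.G0_mem hlt').le
        rw [hGx] at this
        linarith
      refine ⟨hlt1, hdelta1, by rw [psiF_succ]; exact hmx, hG0lt, ?_⟩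
      intro hN1
      have hm : δ₁ ≤ (psiF F G (k+1) y - G (G 0)) * (1/25)^(k+1+1) := hδ₁le (k+1) hN1
      have hpow : ((1:ℝ)/25)^(k+1+1) * 25^(k+1+1) = 1 := by
        rw [← mul_pow]; norm_num
      have h25 : (y - x) * 25^(k+1+1) < psiF F G (k+1) y - G (G 0) := by
        have hmul := mul_lt_mul_of_pos_right (lt_of_lt_of_le hδx1 hm)
          (by positivity : (0:ℝ) < 25^(k+1+1))
        calc (y-x)*25^(k+1+1)
            < ((psiF F G (k+1) y - G (G 0)) * (1/25)^(k+1+1)) * 25^(k+1+1) := hmul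
        _ = (psiF F G (k+1) y - G (G 0)) * ((1/25)^(k+1+1) * 25^(k+1+1)) := by ring
        _ = psiF F G (k+1) y - G (G 0) := by rw [hpow, mul_one]
      linarith
  -- branch value at x
  obtain ⟨hltN, hdN, hmemN, hG0N, _⟩ := key N le_rfl
  have hcalx : calF F G x = psiF F G N x :=
    h.calF_branch_value ⟨hG0N.le, le_trans hltN.le hNhi⟩
      (fun j hj => (key j hj.le).2.2.2.2 hj)
  -- contraction chain
  have hdec : ∀ d k, k + d = N →
      psiF F G k y - psiF F G k x ≤ (49/50)^d * (psiF F G N y - psiF F G N x) := by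
    intro d
    induction d with
    | zero =>
      intro k hk
      rw [Nat.add_zero] at hk
      subst hk
      rw [pow_zero, one_mul]
    | succ d ih =>
      intro k hk
      have hk' : (k+1) + d = N := by omega
      have hkN' : k < N := by omega
      have ihy := ih (k+1) hk'
      obtain ⟨hltk, hdk, hmemk, hG0k, hbigk⟩ := key k hkN'.le
      obtain ⟨hltk1, hdk1, hmemk1, hG0k1, _⟩ := key (k+1) (by omega)
      have hchky := hchy k hkN'.le
      have hchk1y := hchy (k+1) (by omega)
      have hgax : G 0 ≤ psiF F G k x := le_trans h.G0_lt_G20.le (hbigk hkN').le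
      have hgay : G 0 ≤ psiF F G k y := le_trans h.G0_lt_G20.le (hjlt k hkN').le
      obtain ⟨hmx, hGx⟩ := h.invG_spec hgax (le_trans hltk.le hchky.2.1.le)
      obtain ⟨hmy, hGy⟩ := h.invG_spec hgay hchky.2.1.le
      have hstep : psiF F G k y - psiF F G k x ≤
          (49/50) * (psiF F G (k+1) y - psiF F G (k+1) x) := by
        have hmvt : G (psiF F G (k+1) y) - G (psiF F G (k+1) x) ≤
            (49/50) * (psiF F G (k+1) y - psiF F G (k+1) x) := by
          apply sub_le_of_deriv_le hltk1.le h.GhasD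
          intro z hz1 hz2
          apply H.Gd_le_nothole (Good.memI_of z
            (le_trans (mem_unitI.mp hmemk1).1 hz1.le)
            (le_trans hz2.le (mem_unitI.mp hchk1y.2.2.1).2))
          intro hzin
          have h1 : G 0 < z := lt_trans hG0k1 hz1
          have h2 := h.G0_lo
          have h3 := H.hq2
          have h4 := hzin.2
          linarith
        have e1 : G (psiF F G (k+1) y) = psiF F G k y := by rw [psiF_succ, hGy]
        have e2 : G (psiF F G (k+1) x) = psiF F G k x := by rw [psiF_succ, hGx]
        rw [e1, e2] at hmvt
        exact hmvt
      have hnn : 0 ≤ psiF F G N y - psiF F G N x := by linarith [hltN]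
      calc psiF F G k y - psiF F G k x
          ≤ (49/50) * (psiF F G (k+1) y - psiF F G (k+1) x) := hstep
      _ ≤ (49/50) * ((49/50)^d * (psiF F G N y - psiF F G N x)) := by
          apply mul_le_mul_of_nonneg_left ihy (by norm_num)
      _ = (49/50)^(d+1) * (psiF F G N y - psiF F G N x) := by ring
  -- first step
  obtain ⟨hlt0, hd0, hmem0, hG00, _⟩ := key 0 (Nat.zero_le N)
  have hfirst : y - x ≤ (49/50) * (psiF F G 0 y - psiF F G 0 x) := by
    have hcase : Function.invFunOn F unitI y < G cp ∨
        G cq < Function.invFunOn F unitI y := by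
      by_contra hc
      push_neg at hc
      exact huH ⟨hc.1, hc.2⟩
    have hzout : ∀ z, psiF F G 0 x < z → z < psiF F G 0 y →
        z ∉ Set.Icc (G cp) (G cq) := by
      intro z hz1 hz2 hzin
      rcases hcase with hlo | hhi
      · rw [psiF_zero] at hz2
        exact absurd hzin.1 (not_le.mpr (lt_trans hz2 hlo))
      · have hδ2 : δ₂ = (Function.invFunOn F unitI y - G cq) * (1/25) := by
          rw [hδ₂def, if_pos hhi]
        have h1 : (y - x) * 25 < Function.invFunOn F unitI y - G cq := by
          have hmul := mul_lt_mul_of_pos_right hδx2 (by norm_num : (0:ℝ) < 25)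
          rw [hδ2] at hmul
          calc (y-x)*25 < ((Function.invFunOn F unitI y - G cq)*(1/25))*25 := hmul
          _ = Function.invFunOn F unitI y - G cq := by ring
        have h2 : G cq < psiF F G 0 x := by
          have h3 : psiF F G 0 y - psiF F G 0 x ≤ (y-x)*25 := by
            have := hd0; rw [pow_one] at this; exact this
          rw [psiF_zero, psiF_zero] at h3
          rw [psiF_zero]
          linarith
        exact absurd hzin.2 (not_le.mpr (lt_trans h2 hz1))
    have hmvt : F (psiF F G 0 y) - F (psiF F G 0 x) ≤
        (49/50) * (psiF F G 0 y - psiF F G 0 x) := by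
      apply sub_le_of_deriv_le hlt0.le h.FhasD
      intro z hz1 hz2
      refine H.Fd_le_nothole (Good.memI_of z ?_ ?_) (hzout z hz1 hz2)
      · rw [psiF_zero] at hz1
        exact le_trans (mem_unitI.mp hxspec.1).1 hz1.le
      · rw [psiF_zero] at hz2
        exact le_trans hz2.le (mem_unitI.mp huspec.1).2
    have e1 : F (psiF F G 0 y) = y := by rw [psiF_zero]; exact huspec.2
    have e2 : F (psiF F G 0 x) = x := by rw [psiF_zero]; exact hxspec.2
    rw [e1, e2] at hmvt
    exact hmvt
  have hpowle : (49/50:ℝ)^N ≤ 1 := pow_le_one₀ (by norm_num) (by norm_num)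
  have hnn : 0 ≤ psiF F G N y - psiF F G N x := by linarith [hltN]
  have hcomb : y - x ≤ (49/50) * (psiF F G N y - psiF F G N x) := by
    have h0N := hdec N 0 (by omega)
    calc y - x ≤ (49/50) * (psiF F G 0 y - psiF F G 0 x) := hfirst
    _ ≤ (49/50) * ((49/50)^N * (psiF F G N y - psiF F G N x)) := by
        apply mul_le_mul_of_nonneg_left h0N (by norm_num)
    _ ≤ (49/50) * (psiF F G N y - psiF F G N x) := by
        apply mul_le_mul_of_nonneg_left _ (by norm_num)
        nlinarith [hpowle, hnn]
  constructor
  · rw [hcal, hcalx]; exact hltN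
  · rw [hcal, hcalx]; exact hcomb

end Holes



open Topology Filter

namespace Good

variable {F G : ℝ → ℝ}

lemma calF_le_of_lt (h : Good F G) {x : ℝ} (hx0 : F (G 0) < x) (hx1 : x < F 1) :
    calF F G x ≤ G (G 0) := by
  obtain ⟨N, _, _, hNhi, _, hcal⟩ := h.branchF hx0 hx1
  rw [hcal]; exact hNhi

lemma F21_lt_F1 (h : Good F G) : F (F 1) < F 1 := by
  have h1 := h.F21_hi
  have h2 := h.F1_lo
  have he : eps = 1/1000000000 := rfl
  linarith

lemma not_diff_F1 (h : Good F G) : ¬ DifferentiableAt ℝ (calF F G) (F 1) := by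
  intro hd
  have ht : Filter.Tendsto (calF F G) (𝓝[<] (F 1)) (𝓝 1) := by
    have := hd.continuousAt.tendsto
    rw [h.calF_F1] at this
    exact this.mono_left nhdsWithin_le_nhds
  have hev : ∀ᶠ x in 𝓝[<] (F 1), calF F G x ≤ 87/100 := by
    have hmem : Set.Ioo (F (F 1)) (F 1) ∈ 𝓝[<] (F 1) :=
      Ioo_mem_nhdsLT_of_mem ⟨h.F21_lt_F1, le_refl _⟩
    filter_upwards [hmem] with x hx
    have h1 := h.calF_le_of_lt (lt_trans h.FG0_lt_F21 hx.1) hx.2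
    have h2 := h.G20_hi
    have he : eps = 1/1000000000 := rfl
    linarith
  have := le_of_tendsto ht hev
  linarith

end Good

namespace Holes

variable {F G : ℝ → ℝ} {cp cq : ℝ}

lemma Ee_calF (H : Holes F G cp cq) : ∀ y ∈ Fint F 1 \ Set.Icc cp cq,
    DifferentiableAt ℝ (calF F G) y → 51/50 < deriv (calF F G) y := by
  intro y hy hdiff
  have h := H.good
  rw [Fint_eq] at hy
  rcases eq_or_lt_of_le hy.1.2 with heq | hlt
  · rw [heq] at hdiff
    exact absurd hdiff h.not_diff_F1
  · have hy0 : F (G 0) < y := lt_of_lt_of_le h.FG0_lt_F21 hy.1.1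
    obtain ⟨δ, hδ, hkey⟩ := H.slopeF hy0 hlt hy.2
    have hd := hdiff.hasDerivAt
    rw [hasDerivAt_iff_tendsto_slope] at hd
    have h2 : Filter.Tendsto (slope (calF F G) y) (𝓝[<] y) (𝓝 (deriv (calF F G) y)) :=
      hd.mono_left (nhdsWithin_mono _ (fun z hz => ne_of_lt hz))
    have hev : ∀ᶠ x in 𝓝[<] y, 50/49 ≤ slope (calF F G) y x := by
      have hmem : Set.Ioo (y - δ) y ∈ 𝓝[<] y :=
        Ioo_mem_nhdsLT_of_mem ⟨by linarith, le_refl _⟩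
      filter_upwards [hmem] with x hx
      obtain ⟨hm, hq⟩ := hkey x hx.1 hx.2
      have hpos : 0 < y - x := by linarith [hx.2]
      rw [slope_comm, slope_def_field, le_div_iff₀ hpos]
      linarith
    have := ge_of_tendsto h2 hev
    linarith

end Holes

/-! ### the upward chain for `calG` -/

def psiG (F G : ℝ → ℝ) (k : ℕ) (x : ℝ) : ℝ :=
  (Function.invFunOn F unitI)^[k] (Function.invFunOn G unitI x)

lemma psiG_zero (F G : ℝ → ℝ) (x : ℝ) : psiG F G 0 x = Function.invFunOn G unitI x := rfl

lemma psiG_succ (F G : ℝ → ℝ) (k : ℕ) (x : ℝ) :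
    psiG F G (k+1) x = Function.invFunOn F unitI (psiG F G k x) := by
  simp only [psiG, Function.iterate_succ_apply']

lemma calG_def (F G : ℝ → ℝ) (x : ℝ) :
    calG F G x = psiG F G (sInf {n | psiG F G n x ∈ Set.Icc (F (F 1)) (F 1)}) x := by
  rw [show calG F G x = psiG F G (sInf {n | psiG F G n x ∈ Fint F 1}) x from rfl, Fint_eq]

namespace Good

variable {F G : ℝ → ℝ}

lemma F21_pos (h : Good F G) : 0 < F (F 1) := by
  have := h.F21_lo
  have he : eps = 1/1000000000 := rfl
  linarith

lemma G0_lt_GF1 (h : Good F G) : G 0 < G (F 1) := by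
  apply h.GmonoI zero_mem_unitI h.F1_mem
  have := h.F1_lo; linarith

lemma G20_lt_GF1 (h : Good F G) : G (G 0) < G (F 1) :=
  h.GmonoI h.G0_mem h.F1_mem h.A.g0_lt_f1

lemma GF1_le_one (h : Good F G) : G (F 1) ≤ 1 := (mem_unitI.mp (h.A.g_maps h.F1_mem)).2

/-- chain facts for the upward chain -/
lemma chainG (h : Good F G) {x : ℝ} (hx0 : G 0 < x) (hx1 : x < G (F 1)) :
    ∀ k : ℕ, (∀ j < k, psiG F G j x < F (F 1)) →
      (0 < psiG F G k x ∧ psiG F G k x < F 1 ∧ psiG F G k x ∈ unitI ∧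
        F^[k] (psiG F G k x) = Function.invFunOn G unitI x) := by
  have hx1' : x ≤ 1 := le_trans hx1.le h.GF1_le_one
  obtain ⟨hmem, hGi⟩ := h.invG_spec hx0.le hx1'
  intro k
  induction k with
  | zero =>
    intro _
    rw [psiG_zero]
    have h1 : 0 < Function.invFunOn G unitI x := by
      by_contra hle
      push_neg at hle
      have : G (Function.invFunOn G unitI x) ≤ G 0 := by
        rcases eq_or_lt_of_le hle with heq | hlt'
        · rw [heq]
        · exact (h.GmonoI hmem zero_mem_unitI hlt').le
      rw [hGi] at this
      linarith
    have h2 : Function.invFunOn G unitI x < F 1 := by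
      by_contra hle
      push_neg at hle
      have : G (F 1) ≤ G (Function.invFunOn G unitI x) := by
        rcases eq_or_lt_of_le hle with heq | hlt'
        · rw [heq]
        · exact (h.GmonoI h.F1_mem hmem hlt').le
      rw [hGi] at this
      linarith
    exact ⟨h1, h2, hmem, by rw [Function.iterate_zero_apply]⟩
  | succ k ih =>
    intro hj
    have hk := ih (fun j hjk => hj j (lt_trans hjk k.lt_succ_self))
    have hkk : psiG F G k x < F (F 1) := hj k k.lt_succ_self
    have hle1 : psiG F G k x ≤ F 1 := le_trans hkk.le h.F21_lt_F1.le
    obtain ⟨hmem2, hFi⟩ := h.invF_spec hk.1.le hle1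
    rw [psiG_succ] at *
    have h1 : 0 < Function.invFunOn F unitI (psiG F G k x) := by
      by_contra hle
      push_neg at hle
      have : F (Function.invFunOn F unitI (psiG F G k x)) ≤ F 0 := by
        rcases eq_or_lt_of_le hle with heq | hlt'
        · rw [heq]
        · exact (h.FmonoI hmem2 zero_mem_unitI hlt').le
      rw [hFi, h.A.f_zero] at this
      linarith [hk.1]
    have h2 : Function.invFunOn F unitI (psiG F G k x) < F 1 := by
      by_contra hle
      push_neg at hle
      have : F (F 1) ≤ F (Function.invFunOn F unitI (psiG F G k x)) := by
        rcases eq_or_lt_of_le hle with heq | hlt'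
        · rw [heq]
        · exact (h.FmonoI h.F1_mem hmem2 hlt').le
      rw [hFi] at this
      linarith
    refine ⟨h1, h2, hmem2, ?_⟩
    rw [Function.iterate_succ_apply, hFi, hk.2.2.2]

lemma TG_nonempty (h : Good F G) {x : ℝ} (hx0 : G 0 < x) (hx1 : x < G (F 1)) :
    ∃ n, F (F 1) ≤ psiG F G n x := by
  by_contra hno
  push_neg at hno
  have hch : ∀ k, 0 < psiG F G k x ∧ psiG F G k x < F 1 ∧ psiG F G k x ∈ unitI ∧
      F^[k] (psiG F G k x) = Function.invFunOn G unitI x :=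
    fun k => h.chainG hx0 hx1 k (fun j _ => hno j)
  have hstep : ∀ k, F (psiG F G (k+1) x) = psiG F G k x := by
    intro k
    obtain ⟨_, hFi⟩ := h.invF_spec (hch k).1.le (le_trans (hno k).le h.F21_lt_F1.le)
    rw [psiG_succ]; exact hFi
  have hinc : ∀ k, psiG F G k x < psiG F G (k+1) x := by
    intro k
    have h1 := (hch (k+1)).1
    have h2 := (hch (k+1)).2.1
    have h3 : psiG F G (k+1) x < 1 := lt_of_lt_of_le h2 (mem_unitI.mp h.F1_mem).2
    have h4 := h.A.f_lt_id (psiG F G (k+1) x) ⟨h1, h3⟩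
    rw [hstep k] at h4; exact h4
  have hmono : Monotone (fun k => psiG F G k x) :=
    monotone_nat_of_le_succ (fun k => (hinc k).le)
  have hbdd : BddAbove (Set.range fun k => psiG F G k x) :=
    ⟨F (F 1), by rintro y ⟨k, rfl⟩; exact (hno k).le⟩
  have hlim := tendsto_atTop_ciSup hmono hbdd
  set c := ⨆ k, psiG F G k x with hc
  have hc_le : c ≤ F (F 1) := ciSup_le (fun k => (hno k).le)
  have hc_ge : psiG F G 0 x ≤ c := le_ciSup hbdd 0
  have hc_pos : 0 < c := lt_of_lt_of_le (hch 0).1 hc_ge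
  have hc_lt1 : c < 1 := lt_of_le_of_lt hc_le
    (lt_of_lt_of_le h.F21_lt_F1 (mem_unitI.mp h.F1_mem).2)
  have h2 : Filter.Tendsto (fun k => psiG F G (k+1) x) Filter.atTop (𝓝 c) :=
    hlim.comp (Filter.tendsto_add_atTop_nat 1)
  have h3 : Filter.Tendsto (fun k => F (psiG F G (k+1) x)) Filter.atTop (𝓝 (F c)) :=
    (h.Fcont.continuousAt.tendsto).comp h2
  have h4 : (fun k => F (psiG F G (k+1) x)) = fun k => psiG F G k x :=
    funext fun k => hstep k
  rw [h4] at h3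
  have hFc : F c = c := tendsto_nhds_unique h3 hlim
  exact absurd hFc (ne_of_lt (h.A.f_lt_id c ⟨hc_pos, hc_lt1⟩))

lemma calG_branch_value (h : Good F G) {x : ℝ} {N : ℕ}
    (hmem : psiG F G N x ∈ Set.Icc (F (F 1)) (F 1))
    (hjs : ∀ j < N, psiG F G j x < F (F 1)) : calG F G x = psiG F G N x := by
  rw [calG_def]
  congr 1
  apply le_antisymm (Nat.sInf_le hmem)
  by_contra hlt
  push_neg at hlt
  have hne : {n | psiG F G n x ∈ Set.Icc (F (F 1)) (F 1)}.Nonempty := ⟨N, hmem⟩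
  have hmem2 := Nat.sInf_mem hne
  have := hjs _ hlt
  exact absurd hmem2.1 (not_le.mpr this)

lemma branchG (h : Good F G) {x : ℝ} (hx0 : G 0 < x) (hx1 : x < G (F 1)) :
    ∃ N : ℕ, (∀ j < N, psiG F G j x < F (F 1)) ∧
      F (F 1) ≤ psiG F G N x ∧ psiG F G N x < F 1 ∧
      F^[N] (psiG F G N x) = Function.invFunOn G unitI x ∧
      calG F G x = psiG F G N x := by
  obtain ⟨n0, hn0⟩ := h.TG_nonempty hx0 hx1
  have hTne : {n | F (F 1) ≤ psiG F G n x}.Nonempty := ⟨n0, hn0⟩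
  set N := sInf {n | F (F 1) ≤ psiG F G n x} with hN
  have hNm : F (F 1) ≤ psiG F G N x := Nat.sInf_mem hTne
  have hjlt : ∀ j < N, psiG F G j x < F (F 1) := by
    intro j hj
    by_contra hc
    push_neg at hc
    exact Nat.notMem_of_lt_sInf hj hc
  have hch := h.chainG hx0 hx1 N hjlt
  exact ⟨N, hjlt, hNm, hch.2.1, hch.2.2.2,
    h.calG_branch_value ⟨hNm, hch.2.1.le⟩ hjlt⟩

lemma calG_G0 (h : Good F G) : calG F G (G 0) = 0 := by
  have hinv : Function.invFunOn G unitI (G 0) = 0 := h.invG_eq zero_mem_unitI rfl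
  have hF0 : Function.invFunOn F unitI 0 = 0 := h.invF_eq zero_mem_unitI h.A.f_zero
  have hiter : ∀ n, psiG F G n (G 0) = 0 := by
    intro n
    induction n with
    | zero => rw [psiG_zero, hinv]
    | succ k ih => rw [psiG_succ, ih, hF0]
  have hempty : {n | psiG F G n (G 0) ∈ Set.Icc (F (F 1)) (F 1)} = ∅ := by
    ext n
    simp only [Set.mem_setOf_eq, Set.mem_empty_iff_false, iff_false]
    rw [hiter n]
    intro hc
    exact absurd hc.1 (not_le.mpr h.F21_pos)
  rw [calG_def, hempty, Nat.sInf_empty, hiter 0]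

lemma calG_ge_of_gt (h : Good F G) {x : ℝ} (hx0 : G 0 < x) (hx1 : x < G (F 1)) :
    F (F 1) ≤ calG F G x := by
  obtain ⟨N, _, hNlo, _, _, hcal⟩ := h.branchG hx0 hx1
  rw [hcal]; exact hNlo

lemma not_diff_G0 (h : Good F G) : ¬ DifferentiableAt ℝ (calG F G) (G 0) := by
  intro hd
  have ht : Filter.Tendsto (calG F G) (𝓝[>] (G 0)) (𝓝 0) := by
    have := hd.continuousAt.tendsto
    rw [h.calG_G0] at this
    exact this.mono_left nhdsWithin_le_nhds
  have hev : ∀ᶠ x in 𝓝[>] (G 0), 13/100 ≤ calG F G x := by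
    have hmem : Set.Ioo (G 0) (G (G 0)) ∈ 𝓝[>] (G 0) :=
      Ioo_mem_nhdsGT_of_mem ⟨le_refl _, h.G0_lt_G20⟩
    filter_upwards [hmem] with x hx
    have h1 := h.calG_ge_of_gt hx.1 (lt_trans hx.2 h.G20_lt_GF1)
    have h2 := h.F21_lo
    have he : eps = 1/1000000000 := rfl
    linarith
  have := ge_of_tendsto ht hev
  linarith

end Good



open Topology Filter

namespace Holes

variable {F G : ℝ → ℝ} {cp cq : ℝ}

lemma slopeG (H : Holes F G cp cq) {y : ℝ} (hy0 : G 0 < y) (hy1 : y < G (F 1))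
    (hyH : y ∉ Set.Icc (G cp) (G cq)) :
    ∃ δ, 0 < δ ∧ ∀ x, y < x → x < y + δ →
      calG F G y < calG F G x ∧ x - y ≤ (49/50) * (calG F G x - calG F G y) := by
  have h := H.good
  obtain ⟨N, hjlt, hNlo, hNhi, hfwd, hcal⟩ := h.branchG hy0 hy1
  have hchy : ∀ k, k ≤ N → (0 < psiG F G k y ∧ psiG F G k y < F 1 ∧ psiG F G k y ∈ unitI ∧
      F^[k] (psiG F G k y) = Function.invFunOn G unitI y) :=
    fun k hk => h.chainG hy0 hy1 k (fun j hj => hjlt j (lt_of_lt_of_le hj hk))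
  have hy1' : y ≤ 1 := le_trans hy1.le h.GF1_le_one
  have huH : Function.invFunOn G unitI y ∉ Set.Icc cp cq :=
    H.invG_not_in_Hf hy0.le hy1' hyH
  have huspec := h.invG_spec hy0.le hy1'
  obtain ⟨δ₁, hδ₁, hδ₁le⟩ := exists_pos_min
    (fun j => (F (F 1) - psiG F G j y) * (1/25)^(j+1)) N
    (fun j hj => mul_pos (by linarith [hjlt j hj]) (by positivity))
  set δ₂ : ℝ := if Function.invFunOn G unitI y < cp
    then (cp - Function.invFunOn G unitI y) * (1/25) else 1 with hδ₂def
  have hδ₂pos : 0 < δ₂ := by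
    rw [hδ₂def]; split_ifs with hc
    · exact mul_pos (by linarith) (by norm_num)
    · norm_num
  refine ⟨min (min δ₁ δ₂) (G (F 1) - y), lt_min (lt_min hδ₁ hδ₂pos) (by linarith), ?_⟩
  intro x hx2 hx1
  have hmin1 := min_le_left (min δ₁ δ₂) (G (F 1) - y)
  have hmin2 := min_le_right (min δ₁ δ₂) (G (F 1) - y)
  have hmin3 := min_le_left δ₁ δ₂
  have hmin4 := min_le_right δ₁ δ₂
  have hx0 : G 0 < x := lt_trans hy0 hx2
  have hδx1 : x - y < δ₁ := by linarith
  have hδx2 : x - y < δ₂ := by linarith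
  have hx1' : x < G (F 1) := by linarith
  have hxspec := h.invG_spec hx0.le (le_trans hx1'.le h.GF1_le_one)
  have hyx : 0 < x - y := by linarith
  -- key comparison induction
  have key : ∀ k, k ≤ N →
      (psiG F G k y < psiG F G k x ∧
       psiG F G k x - psiG F G k y ≤ (x - y) * 25^(k+1) ∧
       psiG F G k x ∈ unitI ∧ psiG F G k x < F 1 ∧ 0 < psiG F G k x ∧
       (k < N → psiG F G k x < F (F 1))) := by
    intro k
    induction k with
    | zero =>
      intro hkN
      have hlt : psiG F G 0 y < psiG F G 0 x := by
        rw [psiG_zero, psiG_zero]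
        by_contra hle
        push_neg at hle
        have : G (Function.invFunOn G unitI x) ≤ G (Function.invFunOn G unitI y) := by
          rcases eq_or_lt_of_le hle with heq | hlt'
          · rw [heq]
          · exact (h.GmonoI hxspec.1 huspec.1 hlt').le
        rw [hxspec.2, huspec.2] at this
        linarith
      have hdelta : psiG F G 0 x - psiG F G 0 y ≤ (x - y) * 25^(0+1) := by
        have hmvt : (1/25) * (psiG F G 0 x - psiG F G 0 y) ≤
            G (psiG F G 0 x) - G (psiG F G 0 y) := by
          apply sub_ge_of_deriv_ge hlt.le h.GhasD
          intro z hz1 hz2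
          apply h.Gd_lo
          refine Good.memI_of z ?_ ?_
          · rw [psiG_zero] at hz1
            exact le_trans (mem_unitI.mp huspec.1).1 hz1.le
          · rw [psiG_zero] at hz2
            exact le_trans hz2.le (mem_unitI.mp hxspec.1).2
        have e1 : G (psiG F G 0 x) = x := by rw [psiG_zero]; exact hxspec.2
        have e2 : G (psiG F G 0 y) = y := by rw [psiG_zero]; exact huspec.2
        rw [e1, e2] at hmvt
        rw [pow_one]
        linarith
      have hltF1 : psiG F G 0 x < F 1 := by
        rw [psiG_zero]
        by_contra hle
        push_neg at hle
        have : G (F 1) ≤ G (Function.invFunOn G unitI x) := by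
          rcases eq_or_lt_of_le hle with heq | hlt'
          · rw [heq]
          · exact (h.GmonoI h.F1_mem hxspec.1 hlt').le
        rw [hxspec.2] at this
        linarith
      have hpos : 0 < psiG F G 0 x := lt_trans (hchy 0 (Nat.zero_le N)).1 hlt
      refine ⟨hlt, hdelta, by rw [psiG_zero]; exact hxspec.1, hltF1, hpos, ?_⟩
      intro hN0
      have hm : δ₁ ≤ (F (F 1) - psiG F G 0 y) * (1/25)^(0+1) := hδ₁le 0 hN0
      have h25 : (x - y) * 25 < F (F 1) - psiG F G 0 y := by
        have hmul := mul_lt_mul_of_pos_right (lt_of_lt_of_le hδx1 hm)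
          (by norm_num : (0:ℝ) < 25)
        calc (x-y)*25 < ((F (F 1) - psiG F G 0 y) * (1/25)^(0+1)) * 25 := hmul
        _ = F (F 1) - psiG F G 0 y := by ring
      rw [pow_one] at hdelta
      linarith
    | succ k ih =>
      intro hkN
      have hkN' : k < N := hkN
      obtain ⟨hltk, hdk, hmemk, hltF1k, hposk, hsmallk⟩ := ih hkN'.le
      have hsmall : psiG F G k x < F (F 1) := hsmallk hkN'
      have hchky := hchy k hkN'.le
      have hley : psiG F G k y ≤ F 1 := le_trans (hjlt k hkN').le h.F21_lt_F1.le
      have hlex : psiG F G k x ≤ F 1 := le_trans hsmall.le h.F21_lt_F1.le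
      obtain ⟨hmx, hFx⟩ := h.invF_spec hposk.le hlex
      obtain ⟨hmy, hFy⟩ := h.invF_spec (hchky.1).le hley
      have hlt1 : psiG F G (k+1) y < psiG F G (k+1) x := by
        rw [psiG_succ, psiG_succ]
        by_contra hle
        push_neg at hle
        have : F (Function.invFunOn F unitI (psiG F G k x)) ≤
            F (Function.invFunOn F unitI (psiG F G k y)) := by
          rcases eq_or_lt_of_le hle with heq | hlt'
          · rw [heq]
          · exact (h.FmonoI hmx hmy hlt').le
        rw [hFx, hFy] at this
        linarith
      have hdelta1 : psiG F G (k+1) x - psiG F G (k+1) y ≤ (x - y) * 25^(k+1+1) := by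
        have hmvt : (1/25) * (psiG F G (k+1) x - psiG F G (k+1) y) ≤
            F (psiG F G (k+1) x) - F (psiG F G (k+1) y) := by
          apply sub_ge_of_deriv_ge hlt1.le h.FhasD
          intro z hz1 hz2
          apply h.Fd_lo
          refine Good.memI_of z ?_ ?_
          · rw [psiG_succ] at hz1
            exact le_trans (mem_unitI.mp hmy).1 hz1.le
          · rw [psiG_succ] at hz2
            exact le_trans hz2.le (mem_unitI.mp hmx).2
        have e1 : F (psiG F G (k+1) x) = psiG F G k x := by rw [psiG_succ, hFx]
        have e2 : F (psiG F G (k+1) y) = psiG F G k y := by rw [psiG_succ, hFy]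
        rw [e1, e2] at hmvt
        calc psiG F G (k+1) x - psiG F G (k+1) y
            ≤ 25 * (psiG F G k x - psiG F G k y) := by linarith
        _ ≤ 25 * ((x-y) * 25^(k+1)) := by
            apply mul_le_mul_of_nonneg_left hdk (by norm_num)
        _ = (x - y) * 25^(k+1+1) := by ring
      have hltF1' : psiG F G (k+1) x < F 1 := by
        rw [psiG_succ]
        by_contra hle
        push_neg at hle
        have : F (F 1) ≤ F (Function.invFunOn F unitI (psiG F G k x)) := by
          rcases eq_or_lt_of_le hle with heq | hlt'
          · rw [heq]
          · exact (h.FmonoI h.F1_mem hmx hlt').le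
        rw [hFx] at this
        linarith
      have hpos1 : 0 < psiG F G (k+1) x := by
        rw [psiG_succ]
        by_contra hle
        push_neg at hle
        have : F (Function.invFunOn F unitI (psiG F G k x)) ≤ F 0 := by
          rcases eq_or_lt_of_le hle with heq | hlt'
          · rw [heq]
          · exact (h.FmonoI hmx zero_mem_unitI hlt').le
        rw [hFx, h.A.f_zero] at this
        linarith
      refine ⟨hlt1, hdelta1, by rw [psiG_succ]; exact hmx, hltF1', hpos1, ?_⟩
      intro hN1
      have hm : δ₁ ≤ (F (F 1) - psiG F G (k+1) y) * (1/25)^(k+1+1) := hδ₁le (k+1) hN1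
      have hpow : ((1:ℝ)/25)^(k+1+1) * 25^(k+1+1) = 1 := by
        rw [← mul_pow]; norm_num
      have h25 : (x - y) * 25^(k+1+1) < F (F 1) - psiG F G (k+1) y := by
        have hmul := mul_lt_mul_of_pos_right (lt_of_lt_of_le hδx1 hm)
          (by positivity : (0:ℝ) < 25^(k+1+1))
        calc (x-y)*25^(k+1+1)
            < ((F (F 1) - psiG F G (k+1) y) * (1/25)^(k+1+1)) * 25^(k+1+1) := hmul
        _ = (F (F 1) - psiG F G (k+1) y) * (((1:ℝ)/25)^(k+1+1) * 25^(k+1+1)) := by ring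
        _ = F (F 1) - psiG F G (k+1) y := by rw [hpow, mul_one]
      linarith
  -- branch value at x
  obtain ⟨hltN, hdN, hmemN, hltF1N, hposN, _⟩ := key N le_rfl
  have hcalx : calG F G x = psiG F G N x :=
    h.calG_branch_value ⟨le_trans hNlo hltN.le, hltF1N.le⟩
      (fun j hj => (key j hj.le).2.2.2.2.2 hj)
  -- contraction chain
  have hdec : ∀ d k, k + d = N →
      psiG F G k x - psiG F G k y ≤ (49/50)^d * (psiG F G N x - psiG F G N y) := by
    intro d
    induction d with
    | zero =>
      intro k hk
      rw [Nat.add_zero] at hk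
      subst hk
      rw [pow_zero, one_mul]
    | succ d ih =>
      intro k hk
      have hk' : (k+1) + d = N := by omega
      have hkN' : k < N := by omega
      have ihy := ih (k+1) hk'
      obtain ⟨hltk, hdk, hmemk, hltF1k, hposk, hsmallk⟩ := key k hkN'.le
      obtain ⟨hltk1, hdk1, hmemk1, hltF1k1, hposk1, _⟩ := key (k+1) (by omega)
      have hchky := hchy k hkN'.le
      have hchk1y := hchy (k+1) (by omega)
      have hley : psiG F G k y ≤ F 1 := le_trans (hjlt k hkN').le h.F21_lt_F1.le
      have hlex : psiG F G k x ≤ F 1 := le_trans (hsmallk hkN').le h.F21_lt_F1.le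
      obtain ⟨hmx, hFx⟩ := h.invF_spec hposk.le hlex
      obtain ⟨hmy, hFy⟩ := h.invF_spec hchky.1.le hley
      have hstep : psiG F G k x - psiG F G k y ≤
          (49/50) * (psiG F G (k+1) x - psiG F G (k+1) y) := by
        have hmvt : F (psiG F G (k+1) x) - F (psiG F G (k+1) y) ≤
            (49/50) * (psiG F G (k+1) x - psiG F G (k+1) y) := by
          apply sub_le_of_deriv_le hltk1.le h.FhasD
          intro z hz1 hz2
          apply H.Fd_le_nothole (Good.memI_of z
            (le_trans (mem_unitI.mp hchk1y.2.2.1).1 hz1.le)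
            (le_trans hz2.le (mem_unitI.mp hmemk1).2))
          intro hzin
          have h1 : z < F 1 := lt_trans hz2 hltF1k1
          have h2 := h.F1_hi
          have h3 := H.Gp_lo
          have h4 := hzin.1
          linarith
        have e1 : F (psiG F G (k+1) x) = psiG F G k x := by rw [psiG_succ, hFx]
        have e2 : F (psiG F G (k+1) y) = psiG F G k y := by rw [psiG_succ, hFy]
        rw [e1, e2] at hmvt
        exact hmvt
      calc psiG F G k x - psiG F G k y
          ≤ (49/50) * (psiG F G (k+1) x - psiG F G (k+1) y) := hstep
      _ ≤ (49/50) * ((49/50)^d * (psiG F G N x - psiG F G N y)) := by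
          apply mul_le_mul_of_nonneg_left ihy (by norm_num)
      _ = (49/50)^(d+1) * (psiG F G N x - psiG F G N y) := by ring
  -- first step
  obtain ⟨hlt0, hd0, hmem0, hltF10, hpos0, _⟩ := key 0 (Nat.zero_le N)
  have hfirst : x - y ≤ (49/50) * (psiG F G 0 x - psiG F G 0 y) := by
    have hcase : Function.invFunOn G unitI y < cp ∨ cq < Function.invFunOn G unitI y := by
      by_contra hc
      push_neg at hc
      exact huH ⟨hc.1, hc.2⟩
    have hzout : ∀ z, psiG F G 0 y < z → z < psiG F G 0 x → z ∉ Set.Icc cp cq := by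
      intro z hz1 hz2 hzin
      rcases hcase with hlo | hhi
      · have hδ2 : δ₂ = (cp - Function.invFunOn G unitI y) * (1/25) := by
          rw [hδ₂def, if_pos hlo]
        have h1 : (x - y) * 25 < cp - Function.invFunOn G unitI y := by
          have hmul := mul_lt_mul_of_pos_right hδx2 (by norm_num : (0:ℝ) < 25)
          rw [hδ2] at hmul
          calc (x-y)*25 < ((cp - Function.invFunOn G unitI y)*(1/25))*25 := hmul
          _ = cp - Function.invFunOn G unitI y := by ring
        have h2 : psiG F G 0 x < cp := by
          have h3 : psiG F G 0 x - psiG F G 0 y ≤ (x-y)*25 := by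
            have := hd0; rw [pow_one] at this; exact this
          rw [psiG_zero, psiG_zero] at h3
          rw [psiG_zero]
          linarith
        exact absurd hzin.1 (not_le.mpr (lt_trans hz2 h2))
      · rw [psiG_zero] at hz1
        exact absurd hzin.2 (not_le.mpr (lt_trans hhi hz1))
    have hmvt : G (psiG F G 0 x) - G (psiG F G 0 y) ≤
        (49/50) * (psiG F G 0 x - psiG F G 0 y) := by
      apply sub_le_of_deriv_le hlt0.le h.GhasD
      intro z hz1 hz2
      refine H.Gd_le_nothole (Good.memI_of z ?_ ?_) (hzout z hz1 hz2)
      · rw [psiG_zero] at hz1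
        exact le_trans (mem_unitI.mp huspec.1).1 hz1.le
      · rw [psiG_zero] at hz2
        exact le_trans hz2.le (mem_unitI.mp hxspec.1).2
    have e1 : G (psiG F G 0 x) = x := by rw [psiG_zero]; exact hxspec.2
    have e2 : G (psiG F G 0 y) = y := by rw [psiG_zero]; exact huspec.2
    rw [e1, e2] at hmvt
    exact hmvt
  have hpowle : (49/50:ℝ)^N ≤ 1 := pow_le_one₀ (by norm_num) (by norm_num)
  have hnn : 0 ≤ psiG F G N x - psiG F G N y := by linarith [hltN]
  have hcomb : x - y ≤ (49/50) * (psiG F G N x - psiG F G N y) := by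
    have h0N := hdec N 0 (by omega)
    calc x - y ≤ (49/50) * (psiG F G 0 x - psiG F G 0 y) := hfirst
    _ ≤ (49/50) * ((49/50)^N * (psiG F G N x - psiG F G N y)) := by
        apply mul_le_mul_of_nonneg_left h0N (by norm_num)
    _ ≤ (49/50) * (psiG F G N x - psiG F G N y) := by
        apply mul_le_mul_of_nonneg_left _ (by norm_num)
        nlinarith [hpowle, hnn]
  constructor
  · rw [hcal, hcalx]; exact hltN
  · rw [hcal, hcalx]; exact hcomb

lemma Ee_calG (H : Holes F G cp cq) : ∀ y ∈ Gint G 1 \ Set.Icc (G cp) (G cq),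
    DifferentiableAt ℝ (calG F G) y → 51/50 < deriv (calG F G) y := by
  intro y hy hdiff
  have h := H.good
  rw [Gint_eq] at hy
  rcases eq_or_lt_of_le hy.1.1 with heq | hlt
  · rw [← heq] at hdiff
    exact absurd hdiff h.not_diff_G0
  · have hy1 : y < G (F 1) := lt_of_le_of_lt hy.1.2 h.G20_lt_GF1
    obtain ⟨δ, hδ, hkey⟩ := H.slopeG hlt hy1 hy.2
    have hd := hdiff.hasDerivAt
    rw [hasDerivAt_iff_tendsto_slope] at hd
    have h2 : Filter.Tendsto (slope (calG F G) y) (𝓝[>] y) (𝓝 (deriv (calG F G) y)) :=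
      hd.mono_left (nhdsWithin_mono _ (fun z hz => ne_of_gt hz))
    have hev : ∀ᶠ x in 𝓝[>] y, 50/49 ≤ slope (calG F G) y x := by
      have hmem : Set.Ioo y (y + δ) ∈ 𝓝[>] y :=
        Ioo_mem_nhdsGT_of_mem ⟨le_refl _, by linarith⟩
      filter_upwards [hmem] with x hx
      obtain ⟨hm, hq⟩ := hkey x hx.1 hx.2
      have hpos : 0 < x - y := by linarith [hx.1]
      rw [slope_def_field, le_div_iff₀ hpos]
      linarith
    have := ge_of_tendsto h2 hev
    linarith

end Holes



open Topology Filter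

namespace Holes

variable {F G : ℝ → ℝ} {cp cq : ℝ}

lemma Icc_cp_sub (H : Holes F G cp cq) : Set.Icc cp cq ⊆ unitI := by
  intro a ha
  rw [mem_unitI]
  have := H.hp1; have := H.hq2
  exact ⟨by linarith [ha.1], by linarith [ha.2]⟩

lemma Icc_Gp_sub (H : Holes F G cp cq) : Set.Icc (G cp) (G cq) ⊆ unitI := by
  intro a ha
  rw [mem_unitI]
  have h1 := (mem_unitI.mp H.Gp_mem).1
  have h2 := (mem_unitI.mp H.Gq_mem).2
  exact ⟨by linarith [ha.1], by linarith [ha.2]⟩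

lemma image_G_hole (H : Holes F G cp cq) :
    G '' Set.Icc cp cq = Set.Icc (G cp) (G cq) := by
  apply image_Icc_mono H.cp_lt_cq.le
    (H.good.Gcont.continuousOn)
  intro a ha b hb hab
  rcases eq_or_lt_of_le hab with rfl | hlt
  · exact le_refl _
  · exact (H.good.GmonoI (H.Icc_cp_sub ha) (H.Icc_cp_sub hb) hlt).le

lemma image_F_hole (H : Holes F G cp cq) :
    F '' Set.Icc (G cp) (G cq) = Set.Icc cp cq := by
  have h1 : F '' Set.Icc (G cp) (G cq) = Set.Icc (F (G cp)) (F (G cq)) := by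
    apply image_Icc_mono H.Gp_lt_Gq.le (H.good.Fcont.continuousOn)
    intro a ha b hb hab
    rcases eq_or_lt_of_le hab with rfl | hlt
    · exact le_refl _
    · exact (H.good.FmonoI (H.Icc_Gp_sub ha) (H.Icc_Gp_sub hb) hlt).le
  rw [h1, H.fixp, H.fixq]

lemma holeAt_holds (H : Holes F G cp cq) :
    HoleAt F G (Set.Icc cp cq) (Set.Icc (G cp) (G cq)) := by
  have h := H.good
  have he : eps = 1/1000000000 := rfl
  refine ⟨⟨cp, cq, H.cp_lt_cq, rfl⟩, ⟨G cp, G cq, H.Gp_lt_Gq, rfl⟩, ?_, ?_,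
    H.image_G_hole, H.image_F_hole⟩
  · have hdiff : Fint F 1 \ ovW F G = Set.Ico (F (F 1)) (G 0) := by
      rw [Fint_eq]
      ext x
      simp only [ovW, Set.mem_diff, Set.mem_Icc, Set.mem_Ico, not_and, not_le]
      constructor
      · rintro ⟨⟨h1, h2⟩, h3⟩
        exact ⟨h1, by by_contra hc; push_neg at hc; linarith [h3 hc]⟩
      · rintro ⟨h1, h2⟩
        have h3 := h.A.g0_lt_f1
        exact ⟨⟨h1, by linarith⟩, fun hc => by linarith⟩
    rw [hdiff, interior_Ico]
    intro a ha
    have h1 := H.hp1; have h2 := H.hq2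
    have h3 := h.F21_hi; have h4 := h.G0_lo
    exact ⟨by linarith [ha.1], by linarith [ha.2]⟩
  · have hdiff : Gint G 1 \ ovW F G = Set.Ioc (F 1) (G (G 0)) := by
      rw [Gint_eq]
      ext x
      simp only [ovW, Set.mem_diff, Set.mem_Icc, Set.mem_Ioc, not_and, not_le]
      constructor
      · rintro ⟨⟨h1, h2⟩, h3⟩
        exact ⟨h3 h1, h2⟩
      · rintro ⟨h1, h2⟩
        have h3 := h.A.g0_lt_f1
        exact ⟨⟨by linarith, h2⟩, fun _ => h1⟩
    rw [hdiff, interior_Ioc]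
    intro a ha
    have h1 := H.Gp_lo; have h2 := H.Gq_hi
    have h3 := h.F1_hi; have h4 := h.G20_lo
    exact ⟨by linarith [ha.1], by linarith [ha.2]⟩

/-! numeric endpoint ladders for the castration region -/

lemma FGGp_le (H : Holes F G cp cq) : F (G (G cp)) ≤ G 0 - 1/500 := by
  have h := H.good
  have he : eps = 1/1000000000 := rfl
  have h1 : G (G cp) ≤ G (14107/25000) := by
    rcases eq_or_lt_of_le H.Gp_hi with heq | hlt
    · rw [show (56428:ℝ)/100000 = 14107/25000 by norm_num] at heq
      rw [heq]
    · exact (h.GmonoI H.Gp_mem (Good.memI_of _ (by norm_num) (by norm_num))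
        (by linarith)).le
  have h2 : gB (14107/25000) = 1 - fB (10893/25000) := by simp only [gB]; norm_num
  have h3 := h.Gval_hi (Good.memI_of ((14107:ℝ)/25000) (by norm_num) (by norm_num))
    (le_refl (gB (14107/25000)))
  have h4 : fB ((43571:ℝ)/100000) ≤ fB ((10893:ℝ)/25000) :=
    Good.fB_mono (Good.memI_of _ (by norm_num) (by norm_num))
      (Good.memI_of _ (by norm_num) (by norm_num)) (by norm_num)
  have h5 := nb_caU1a
  -- G (G cp) ≤ 1 - fB(0.43572) + eps ≤ 1 - 0.10996 + eps ≤ 0.89006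
  have h6 : G (G cp) ≤ (44503:ℝ)/50000 := by rw [h2] at h3; linarith
  have h7 : fB (G (G cp)) ≤ fB ((44503:ℝ)/50000) :=
    Good.fB_mono (h.A.g_maps (h.A.g_maps H.cp_mem))
      (Good.memI_of _ (by norm_num) (by norm_num)) h6
  have h8 := h.Fval_hi (h.A.g_maps (h.A.g_maps H.cp_mem)) (le_refl (fB (G (G cp))))
  have h9 := nb_caU1b
  have h10 := h.G0_lo
  linarith

lemma FGGq_ge (H : Holes F G cp cq) : F 1 - 1/250 ≤ F (G (G cq)) := by
  have h := H.good
  have he : eps = 1/1000000000 := rfl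
  have h1 : G (8337/10000) ≤ G (G cq) := by
    rcases eq_or_lt_of_le H.Gq_lo with heq | hlt
    · rw [show (83370:ℝ)/100000 = 8337/10000 by norm_num] at heq
      rw [← heq]
    · exact (h.GmonoI (Good.memI_of _ (by norm_num) (by norm_num)) H.Gq_mem
        (by linarith)).le
  have h2 : gB (8337/10000) = 1 - fB (1663/10000) := by simp only [gB]; norm_num
  have h3 := h.Gval_lo (Good.memI_of ((8337:ℝ)/10000) (by norm_num) (by norm_num))
    (le_refl (gB (8337/10000)))
  have h4 : fB ((1663:ℝ)/10000) ≤ fB ((16631:ℝ)/100000) :=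
    Good.fB_mono (Good.memI_of _ (by norm_num) (by norm_num))
      (Good.memI_of _ (by norm_num) (by norm_num)) (by norm_num)
  have h5 := nb_caU1c
  have h6 : (97199:ℝ)/100000 ≤ G (G cq) := by rw [h2] at h3; linarith
  have h7 : fB ((97199:ℝ)/100000) ≤ fB (G (G cq)) :=
    Good.fB_mono (Good.memI_of _ (by norm_num) (by norm_num))
      (h.A.g_maps (h.A.g_maps H.cq_mem)) h6
  have h8 := h.Fval_lo (h.A.g_maps (h.A.g_maps H.cq_mem)) (le_refl (fB (G (G cq))))
  have h9 := nb_caU1d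
  have h10 := h.F1_hi
  linarith

lemma GFp_le (H : Holes F G cp cq) : G (F cp) ≤ G 0 + 21/5000 := by
  have h := H.good
  have he : eps = 1/1000000000 := rfl
  have h1 : F cp ≤ F (17/100) := by
    rcases eq_or_lt_of_le H.hp2 with heq | hlt
    · rw [heq]
    · exact (h.FmonoI H.cp_mem (Good.memI_of _ (by norm_num) (by norm_num)) hlt).le
  have h2 := h.Fval_hi (Good.memI_of ((17:ℝ)/100) (by norm_num) (by norm_num))
    (le_refl (fB (17/100)))
  have h3 := nb_caU2a
  have h4 : F cp ≤ (2896:ℝ)/100000 := by linarith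
  have h5 : G (F cp) ≤ G ((2896:ℝ)/100000) := by
    rcases eq_or_lt_of_le h4 with heq | hlt
    · rw [heq]
    · exact (h.GmonoI (h.A.f_maps H.cp_mem)
        (Good.memI_of _ (by norm_num) (by norm_num)) hlt).le
  have h6 : gB ((2896:ℝ)/100000) = 1 - fB ((97104:ℝ)/100000) := by
    simp only [gB]; norm_num
  have h7 := h.Gval_hi (Good.memI_of ((2896:ℝ)/100000) (by norm_num) (by norm_num))
    (le_refl (gB (2896/100000)))
  have h8 : fB ((97103:ℝ)/100000) ≤ fB ((97104:ℝ)/100000) :=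
    Good.fB_mono (Good.memI_of _ (by norm_num) (by norm_num))
      (Good.memI_of _ (by norm_num) (by norm_num)) (by norm_num)
  have h9 := nb_caU2b
  have h10 := h.G0_lo
  rw [h6] at h7
  linarith

lemma GFq_ge (H : Holes F G cp cq) : F 1 + 1/500 ≤ G (F cq) := by
  have h := H.good
  have he : eps = 1/1000000000 := rfl
  have h1 : F (43/100) ≤ F cq := by
    rcases eq_or_lt_of_le H.hq1 with heq | hlt
    · rw [← heq]
    · exact (h.FmonoI (Good.memI_of _ (by norm_num) (by norm_num)) H.cq_mem hlt).le
  have h2 := h.Fval_lo (Good.memI_of ((43:ℝ)/100) (by norm_num) (by norm_num))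
    (le_refl (fB (43/100)))
  have h3 := nb_caU2c
  have h4 : (10815:ℝ)/100000 ≤ F cq := by linarith
  have h5 : G ((10815:ℝ)/100000) ≤ G (F cq) := by
    rcases eq_or_lt_of_le h4 with heq | hlt
    · rw [heq]
    · exact (h.GmonoI (Good.memI_of _ (by norm_num) (by norm_num))
        (h.A.f_maps H.cq_mem) hlt).le
  have h6 : gB ((10815:ℝ)/100000) = 1 - fB ((89185:ℝ)/100000) := by
    simp only [gB]; norm_num
  have h7 := h.Gval_lo (Good.memI_of ((10815:ℝ)/100000) (by norm_num) (by norm_num))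
    (le_refl (gB (10815/100000)))
  have h8 : fB ((89185:ℝ)/100000) ≤ fB ((44593:ℝ)/50000) :=
    Good.fB_mono (Good.memI_of _ (by norm_num) (by norm_num))
      (Good.memI_of _ (by norm_num) (by norm_num)) (by norm_num)
  have h9 := nb_caU2d
  have h10 := h.F1_hi
  rw [h6] at h7
  linarith

/-! single-overlap branch computations -/

lemma calF_branch1 (H : Holes F G cp cq) {z : ℝ} (hz : z ∈ Set.Ioo (G cp) (G cq)) :
    calF F G (F (G z)) = z := by
  have h := H.good
  have he : eps = 1/1000000000 := rfl
  have hzI : z ∈ unitI := H.Icc_Gp_sub ⟨hz.1.le, hz.2.le⟩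
  have hGzI : G z ∈ unitI := h.A.g_maps hzI
  have hinvF : Function.invFunOn F unitI (F (G z)) = G z := h.invF_eq hGzI rfl
  have hinvG : Function.invFunOn G unitI (G z) = z := h.invG_eq hzI rfl
  have hpsi0 : psiF F G 0 (F (G z)) = G z := by rw [psiF_zero, hinvF]
  have hpsi1 : psiF F G 1 (F (G z)) = z := by rw [psiF_succ, hpsi0, hinvG]
  have hzlo : G 0 < z := by
    have := H.Gp_lo; have := h.G0_hi
    linarith [hz.1]
  have hzhi : z ≤ G (G 0) := by
    have := H.Gq_hi; have := h.G20_lo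
    linarith [hz.2]
  have hbig : G (G 0) < psiF F G 0 (F (G z)) := by
    rw [hpsi0]
    exact h.GmonoI h.G0_mem hzI hzlo
  have := h.calF_branch_value (N := 1) (x := F (G z))
    (by rw [hpsi1]; exact ⟨by linarith, hzhi⟩)
    (by intro j hj; interval_cases j; exact hbig)
  rw [this, hpsi1]

lemma calG_branch1 (H : Holes F G cp cq) {w : ℝ} (hw : w ∈ Set.Ioo cp cq) :
    calG F G (G (F w)) = w := by
  have h := H.good
  have he : eps = 1/1000000000 := rfl
  have hwI : w ∈ unitI := H.Icc_cp_sub ⟨hw.1.le, hw.2.le⟩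
  have hFwI : F w ∈ unitI := h.A.f_maps hwI
  have hinvG : Function.invFunOn G unitI (G (F w)) = F w := h.invG_eq hFwI rfl
  have hinvF : Function.invFunOn F unitI (F w) = w := h.invF_eq hwI rfl
  have hpsi0 : psiG F G 0 (G (F w)) = F w := by rw [psiG_zero, hinvG]
  have hpsi1 : psiG F G 1 (G (F w)) = w := by rw [psiG_succ, hpsi0, hinvF]
  have hwlo : F (F 1) < w := by
    have := H.hp1; have := h.F21_hi
    linarith [hw.1]
  have hwhi : w < F 1 := by
    have := H.hq2; have := h.F1_lo
    linarith [hw.2]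
  have hsmall : psiG F G 0 (G (F w)) < F (F 1) := by
    rw [hpsi0]
    exact h.FmonoI hwI h.F1_mem hwhi
  have := h.calG_branch_value (N := 1) (x := G (F w))
    (by rw [hpsi1]; exact ⟨hwlo.le, hwhi.le⟩)
    (by intro j hj; interval_cases j; exact hsmall)
  rw [this, hpsi1]

lemma Rf_sup (H : Holes F G cp cq) :
    Set.Ioo (G 0 - 1/500) (F 1 - 1/250) ⊆ Rf F G (Set.Icc (G cp) (G cq)) := by
  have h := H.good
  have he : eps = 1/1000000000 := rfl
  intro x hx
  have hmem : x ∈ Set.Ioo (F (G (G cp))) (F (G (G cq))) := by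
    have h1 := H.FGGp_le
    have h2 := H.FGGq_ge
    exact ⟨by linarith [hx.1], by linarith [hx.2]⟩
  have hcont : ContinuousOn (fun z => F (G z)) (Set.Icc (G cp) (G cq)) :=
    (h.Fcont.comp h.Gcont).continuousOn
  obtain ⟨z, hz, hfz⟩ := intermediate_value_Ioo H.Gp_lt_Gq.le hcont hmem
  have hcal : calF F G x = z := by rw [← hfz]; exact H.calF_branch1 hz
  constructor
  · constructor
    · rw [Fint_eq]
      have h1 := h.F21_hi
      have h2 := h.G0_lo
      exact ⟨by linarith [hx.1], by linarith [hx.2]⟩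
    · simp only [Set.mem_singleton_iff]
      intro hc
      rw [hc] at hx
      linarith [hx.2]
  · rw [hcal]
    exact ⟨hz.1.le, hz.2.le⟩

lemma Rg_sup (H : Holes F G cp cq) :
    Set.Ioo (G 0 + 21/5000) (F 1 + 1/500) ⊆ Rg F G (Set.Icc cp cq) := by
  have h := H.good
  have he : eps = 1/1000000000 := rfl
  intro x hx
  have hmem : x ∈ Set.Ioo (G (F cp)) (G (F cq)) := by
    have h1 := H.GFp_le
    have h2 := H.GFq_ge
    exact ⟨by linarith [hx.1], by linarith [hx.2]⟩
  have hcont : ContinuousOn (fun w => G (F w)) (Set.Icc cp cq) :=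
    (h.Gcont.comp h.Fcont).continuousOn
  obtain ⟨w, hw, hfw⟩ := intermediate_value_Ioo H.cp_lt_cq.le hcont hmem
  have hcal : calG F G x = w := by rw [← hfw]; exact H.calG_branch1 hw
  constructor
  · constructor
    · rw [Gint_eq]
      have h1 := h.G20_lo
      have h2 := h.F1_hi
      exact ⟨by linarith [hx.1], by linarith [hx.2]⟩
    · simp only [Set.mem_singleton_iff]
      intro hc
      rw [hc] at hx
      linarith [hx.1]
  · rw [hcal]
    exact ⟨hw.1.le, hw.2.le⟩

lemma Ca_holds (H : Holes F G cp cq) :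
    Ca F G (Set.Icc cp cq) (Set.Icc (G cp) (G cq)) := by
  have h := H.good
  have he : eps = 1/1000000000 := rfl
  intro x hx
  have hx1 : G 0 ≤ x := hx.1
  have hx2 : x ≤ F 1 := hx.2
  have hF1 := h.F1_lo
  have hG0 := h.G0_hi
  rcases lt_or_ge x (F 1 - 1/250) with hcase | hcase
  · left
    apply interior_maximal H.Rf_sup isOpen_Ioo
    exact ⟨by linarith, hcase⟩
  · right
    apply interior_maximal H.Rg_sup isOpen_Ioo
    exact ⟨by linarith, by linarith⟩

lemma MemC_holds (H : Holes F G cp cq) :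
    MemC F G (Set.Icc cp cq) (Set.Icc (G cp) (G cq)) :=
  ⟨H.good.A, H.good.So_holds, H.holeAt_holds,
    ⟨51/50, by norm_num, H.Ee_calF, H.Ee_calG⟩, H.Ca_holds⟩

end Holes

lemma good_self : Good fB gB where
  A := memA_base
  Fc := fun x _ => by simp only [sub_self, abs_zero]; exact eps_pos.le
  Fd := fun x _ => by rw [fB_deriv]; simp only [sub_self, abs_zero]; exact eps_pos.le
  Gc := fun x _ => by simp only [sub_self, abs_zero]; exact eps_pos.le
  Gd := fun x _ => by rw [gB_deriv]; simp only [sub_self, abs_zero]; exact eps_pos.le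

lemma good_of_close {F G : ℝ → ℝ} (hA : MemA F G)
    (hF : ∀ x ∈ unitI, ∀ y ∈ unitI, |F x - fB x| + |deriv F y - deriv fB y| < eps)
    (hG : ∀ x ∈ unitI, ∀ y ∈ unitI, |G x - gB x| + |deriv G y - deriv gB y| < eps) :
    Good F G where
  A := hA
  Fc := fun x hx => by
    have := hF x hx 0 zero_mem_unitI
    have h2 := abs_nonneg (deriv F 0 - deriv fB 0)
    linarith
  Fd := fun y hy => by
    have := hF 0 zero_mem_unitI y hy
    have h2 := abs_nonneg (F 0 - fB 0)
    rw [fB_deriv] at this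
    linarith
  Gc := fun x hx => by
    have := hG x hx 0 zero_mem_unitI
    have h2 := abs_nonneg (deriv G 0 - deriv gB 0)
    linarith
  Gd := fun y hy => by
    have := hG 0 zero_mem_unitI y hy
    have h2 := abs_nonneg (G 0 - gB 0)
    rw [gB_deriv] at this
    linarith

/-- the class `𝒞` is nonempty and has a `C¹`-interior point within `𝒜`:
there are `(f,g) ∈ 𝒞` and `ε > 0` such that every `(f',g') ∈ 𝒜` which is `ε`-close to
`(f,g)` in the `C¹` sense (sup distance of maps plus sup distance of derivatives over `I`)
also satisfies `So`, `Ho`, `Ee` and `Ca` for some choice of holes. -/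
theorem classC_has_interior_point :
    ∃ (f g : ℝ → ℝ) (Hf Hg : Set ℝ) (ε : ℝ), 0 < ε ∧ MemC f g Hf Hg ∧
      ∀ f' g' : ℝ → ℝ, MemA f' g' →
        (∀ x ∈ unitI, ∀ y ∈ unitI, |f' x - f x| + |deriv f' y - deriv f y| < ε) →
        (∀ x ∈ unitI, ∀ y ∈ unitI, |g' x - g x| + |deriv g' y - deriv g y| < ε) →
        ∃ Hf' Hg' : Set ℝ, MemC f' g' Hf' Hg' := by
  obtain ⟨cp, cq, H⟩ := good_self.exists_holes
  refine ⟨fB, gB, Set.Icc cp cq, Set.Icc (gB cp) (gB cq), eps, eps_pos, H.MemC_holds, ?_⟩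
  intro F' G' hA hF hG
  obtain ⟨cp', cq', H'⟩ := (good_of_close hA hF hG).exists_holes
  exact ⟨_, _, H'.MemC_holds⟩

end IFSPaper
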